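/- arXiv:2506.16171 — 2 statements merged into one kernel-verified Lean document; each statement's English description precedes it below -/
import Mathlib

section
/- Let ε > 0 be a real number, let G = (V, E, A) be a mixed graph on a finite vertex set whose underlying graph UG(G) is connected, whose undirected edge set E forms a forest, and which is dismembered, with k = |A| ≥ 1, and let w : V → ℕ. Let T₁, …, T_q be the undirected components of G and for each i let 𝒯_i be an (ε/(392·k³))-optimal replacement set for ((G,w), T_i). Then there exists an orientation D of G that is (1−ε)-optimal for (G,w) (i.e. R(D,w) ≥ (1−ε)·R(D',w) for every orientation D' of G) and such that for each i ∈ {1,…,q}, the orientation of T_i inherited from D belongs to 𝒯_i. -/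
open Finset

variable {V : Type*}

-- `kappa A u v = 1` if `v` is reachable from `u` in the digraph with arc relation `A`.
open Classical in
noncomputable def kappa (A : V → V → Prop) (u v : V) : ℕ :=
  if Relation.ReflTransGen A u v then 1 else 0

/-- `R(D, w) = 2 ∑_v C(w(v), 2) + ∑_{(u,v), u ≠ v} w(u) w(v) κ_D(u,v)`. -/
noncomputable def Rw [Fintype V] [DecidableEq V] (A : V → V → Prop) (w : V → ℕ) : ℕ :=
  2 * ∑ v, Nat.choose (w v) 2 +
    ∑ p ∈ Finset.univ.offDiag, w p.1 * w p.2 * kappa A p.1 p.2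

/-- A mixed graph: a set of undirected edges (unordered pairs of distinct vertices)
together with a set of arcs (ordered pairs of distinct vertices). -/
structure MixedGraph (V : Type*) where
  edges : Finset (Sym2 V)
  arcs : Finset (V × V)
  edges_not_diag : ∀ e ∈ edges, ¬ e.IsDiag
  arcs_ne : ∀ a ∈ arcs, a.1 ≠ a.2

namespace MixedGraph

/-- The simple graph formed by the undirected edges of `G`. -/
def edgeGraph (G : MixedGraph V) : SimpleGraph V where
  Adj u v := s(u, v) ∈ G.edges
  symm := by
    constructor
    intro u v h
    rwa [Sym2.eq_swap] at h
  loopless := by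
    constructor
    intro v h
    exact G.edges_not_diag _ h (Sym2.mk_isDiag_iff.mpr rfl)

/-- The underlying graph of `G`: edges plus (forgotten) arcs. -/
def UG (G : MixedGraph V) : SimpleGraph V where
  Adj u v := s(u, v) ∈ G.edges ∨ (u, v) ∈ G.arcs ∨ (v, u) ∈ G.arcs
  symm := by
    constructor
    intro u v h
    rcases h with h | h | h
    · left; rwa [Sym2.eq_swap] at h
    · right; right; exact h
    · right; left; exact h
  loopless := by
    constructor
    intro v h
    rcases h with h | h | h
    · exact G.edges_not_diag _ h (Sym2.mk_isDiag_iff.mpr rfl)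
    · exact G.arcs_ne _ h rfl
    · exact G.arcs_ne _ h rfl

/-- The arc relation of the orientation of `G` determined by the choice `o` of
directions for the undirected edges: all arcs of `G` together with the arcs of `o`. -/
def dig (G : MixedGraph V) (o : V → V → Prop) : V → V → Prop :=
  fun u v => (u, v) ∈ G.arcs ∨ o u v

/-- The set of vertices incident to an arc of `G`. -/
def arcVerts (G : MixedGraph V) : Set V := {v | ∃ a ∈ G.arcs, a.1 = v ∨ a.2 = v}

/-- `G` is dismembered: every undirected component of `G` contains at most one vertex
incident to an arc, or contains exactly two vertices incident to arcs, each of them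
incident to exactly one arc. -/
def Dismembered [DecidableEq V] (G : MixedGraph V) : Prop :=
  ∀ c : G.edgeGraph.ConnectedComponent,
    (c.supp ∩ G.arcVerts).Subsingleton ∨
      ∃ a b : V, a ≠ b ∧ c.supp ∩ G.arcVerts = {a, b} ∧
        (G.arcs.filter fun p => p.1 = a ∨ p.2 = a).card = 1 ∧
        (G.arcs.filter fun p => p.1 = b ∨ p.2 = b).card = 1

/-- The edges of the undirected component `c` of `G`. -/
def compEdges (G : MixedGraph V) (c : G.edgeGraph.ConnectedComponent) :
    Set (Sym2 V) := {e | e ∈ G.edges ∧ ∀ v ∈ e, v ∈ c.supp}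

end MixedGraph

/-- `o` chooses exactly one direction for each edge in `E'`, and relates nothing else.
Orientations of a mixed graph `G` correspond to choices `o` with
`OrientsEdges ↑G.edges o`, the orientation being the digraph `G.dig o`. -/
def OrientsEdges (E' : Set (Sym2 V)) (o : V → V → Prop) : Prop :=
  (∀ u v, o u v → s(u, v) ∈ E') ∧ (∀ u v, s(u, v) ∈ E' → (o u v ↔ ¬ o v u))

/-- The orientation of the undirected component `c` inherited from the
edge-orientation `o`. -/
def inheritO (G : MixedGraph V) (c : G.edgeGraph.ConnectedComponent)
    (o : V → V → Prop) : V → V → Prop :=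
  fun u v => o u v ∧ u ∈ c.supp ∧ v ∈ c.supp

/-- The edge-orientation obtained from `o` by reorienting the edges of the
undirected component `c` according to `oT` (this is `D⟨T'⟩`). -/
def replaceO (G : MixedGraph V) (c : G.edgeGraph.ConnectedComponent)
    (o oT : V → V → Prop) : V → V → Prop :=
  fun u v => (o u v ∧ (u ∉ c.supp ∨ v ∉ c.supp)) ∨ oT u v

/-- `𝒯` is an optimal replacement set for `((G, w), T)` where `T` is the undirected
component `c`. -/
def IsOptReplacementSet [Fintype V] [DecidableEq V] (G : MixedGraph V) (w : V → ℕ)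
    (c : G.edgeGraph.ConnectedComponent) (𝒯 : Set (V → V → Prop)) : Prop :=
  (∀ oT ∈ 𝒯, OrientsEdges (G.compEdges c) oT) ∧
    ∀ o, OrientsEdges (G.edges : Set (Sym2 V)) o →
      ∃ oT ∈ 𝒯, Rw (G.dig o) w ≤ Rw (G.dig (replaceO G c o oT)) w

/-- `𝒯` is a `δ`-optimal replacement set for `((G, w), T)` where `T` is the
undirected component `c`. -/
def IsApproxReplacementSet [Fintype V] [DecidableEq V] (G : MixedGraph V) (w : V → ℕ)
    (c : G.edgeGraph.ConnectedComponent) (δ : ℝ) (𝒯 : Set (V → V → Prop)) : Prop :=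
  (∀ oT ∈ 𝒯, OrientsEdges (G.compEdges c) oT) ∧
    ∀ o, OrientsEdges (G.edges : Set (Sym2 V)) o →
      ∃ oT ∈ 𝒯, (Rw (G.dig o) w : ℝ) - δ * (∑ v, (w v : ℝ)) ^ 2
        ≤ (Rw (G.dig (replaceO G c o oT)) w : ℝ)

section Aux14
variable {V : Type*}

lemma kappa_le_one (A : V → V → Prop) (u v : V) : kappa A u v ≤ 1 := by
  unfold kappa; split <;> simp

lemma kappa_eq_one {A : V → V → Prop} {u v : V} (h : Relation.ReflTransGen A u v) :
    kappa A u v = 1 := by unfold kappa; rw [if_pos h]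

lemma kappa_mono {A B : V → V → Prop} (h : ∀ a b, A a b → B a b) (u v : V) :
    kappa A u v ≤ kappa B u v := by
  unfold kappa
  by_cases h1 : Relation.ReflTransGen A u v
  · rw [if_pos h1, if_pos (Relation.ReflTransGen.mono h _ _ h1)]
  · rw [if_neg h1]; positivity

/-- a fixed "standard" orientation of any set of non-diagonal edges -/
noncomputable def stdO [Fintype V] [DecidableEq V] (E' : Set (Sym2 V)) : V → V → Prop :=
  fun u v => s(u, v) ∈ E' ∧ (Fintype.equivFin V u : ℕ) < Fintype.equivFin V v

lemma stdO_orients [Fintype V] [DecidableEq V] {E' : Set (Sym2 V)}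
    (hE : ∀ e ∈ E', ¬ e.IsDiag) : OrientsEdges E' (stdO E') := by
  constructor
  · intro u v h; exact h.1
  · intro u v h
    have hvu : s(v, u) ∈ E' := by rwa [Sym2.eq_swap] at h
    have hne : u ≠ v := by rintro rfl; exact hE _ h (Sym2.mk_isDiag_iff.mpr rfl)
    have hne' : (Fintype.equivFin V u : ℕ) ≠ (Fintype.equivFin V v : ℕ) := by
      simp only [ne_eq, Fin.val_eq_val, EmbeddingLike.apply_eq_iff_eq]
      exact hne
    constructor
    · rintro ⟨-, hlt⟩ ⟨-, hlt'⟩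
      exact absurd (hlt.trans hlt') (lt_irrefl _)
    · intro hn
      refine ⟨h, ?_⟩
      rcases lt_or_gt_of_ne hne' with h' | h'
      · exact h'
      · exact absurd ⟨hvu, h'⟩ hn

namespace MixedGraph

lemma edge_mk_eq {G : MixedGraph V} {u v : V} (h : s(u, v) ∈ G.edges) :
    G.edgeGraph.connectedComponentMk u = G.edgeGraph.connectedComponentMk v :=
  SimpleGraph.ConnectedComponent.eq.mpr (SimpleGraph.Adj.reachable (by exact h))

lemma mem_compEdges {G : MixedGraph V} {c : G.edgeGraph.ConnectedComponent} {u v : V} :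
    s(u, v) ∈ G.compEdges c ↔ s(u, v) ∈ G.edges ∧ u ∈ c.supp ∧ v ∈ c.supp := by
  constructor
  · rintro ⟨he, hall⟩
    exact ⟨he, hall u (by simp), hall v (by simp)⟩
  · rintro ⟨he, hu, hv⟩
    refine ⟨he, ?_⟩
    intro x hx
    rw [Sym2.mem_iff] at hx
    rcases hx with rfl | rfl <;> assumption

lemma oT_mem_supp {G : MixedGraph V} {c : G.edgeGraph.ConnectedComponent}
    {oT : V → V → Prop} (hoT : OrientsEdges (G.compEdges c) oT) {u v : V} (h : oT u v) :
    s(u, v) ∈ G.edges ∧ u ∈ c.supp ∧ v ∈ c.supp :=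
  mem_compEdges.mp (hoT.1 u v h)

lemma replace_orients {G : MixedGraph V} {c : G.edgeGraph.ConnectedComponent}
    {o oT : V → V → Prop} (ho : OrientsEdges (G.edges : Set (Sym2 V)) o)
    (hoT : OrientsEdges (G.compEdges c) oT) :
    OrientsEdges (G.edges : Set (Sym2 V)) (replaceO G c o oT) := by
  constructor
  · rintro u v (⟨h, -⟩ | h)
    · exact ho.1 u v h
    · exact Finset.mem_coe.mpr (oT_mem_supp hoT h).1
  · intro u v h
    have h' : s(u, v) ∈ G.edges := Finset.mem_coe.mp h
    by_cases hc : u ∈ c.supp ∧ v ∈ c.supp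
    · have hce : s(u, v) ∈ G.compEdges c := mem_compEdges.mpr ⟨h', hc.1, hc.2⟩
      have hce' : s(v, u) ∈ G.compEdges c := by rwa [Sym2.eq_swap] at hce
      have hT := hoT.2 u v hce
      constructor
      · rintro (⟨-, hns⟩ | hT1)
        · rcases hns with hns | hns
          · exact absurd hc.1 hns
          · exact absurd hc.2 hns
        · rintro (⟨-, hns⟩ | hT2)
          · rcases hns with hns | hns
            · exact absurd hc.2 hns
            · exact absurd hc.1 hns
          · exact (hT.mp hT1) hT2
      · intro hn
        right
        rw [hT]
        intro hT2
        exact hn (Or.inr hT2)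
    · have hnotT : ∀ a b : V, (a ∉ c.supp ∨ b ∉ c.supp) → ¬ oT a b := by
        rintro a b hab hT
        obtain ⟨-, ha, hb⟩ := oT_mem_supp hoT hT
        rcases hab with h1 | h1 <;> [exact h1 ha; exact h1 hb]
      have hns : u ∉ c.supp ∨ v ∉ c.supp := by
        by_contra hcon
        push_neg at hcon
        exact hc ⟨hcon.1, hcon.2⟩
      have hns' : v ∉ c.supp ∨ u ∉ c.supp := hns.symm
      have hdef := ho.2 u v h
      constructor
      · rintro (⟨h1, -⟩ | hT1)
        · rintro (⟨h2, -⟩ | hT2)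
          · exact (hdef.mp h1) h2
          · exact hnotT v u hns' hT2
        · exact absurd hT1 (hnotT u v hns)
      · intro hn
        left
        refine ⟨?_, hns⟩
        rw [hdef]
        intro h2
        exact hn (Or.inl ⟨h2, hns'⟩)

lemma inherit_replace_self {G : MixedGraph V} {c : G.edgeGraph.ConnectedComponent}
    {o oT : V → V → Prop} (hoT : OrientsEdges (G.compEdges c) oT) :
    inheritO G c (replaceO G c o oT) = oT := by
  funext u v
  apply propext
  constructor
  · rintro ⟨(⟨-, hns⟩ | hT), hu, hv⟩
    · rcases hns with hns | hns <;> [exact absurd hu hns; exact absurd hv hns]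
    · exact hT
  · intro hT
    obtain ⟨-, hu, hv⟩ := oT_mem_supp hoT hT
    exact ⟨Or.inr hT, hu, hv⟩

lemma inherit_replace_other {G : MixedGraph V} {c c' : G.edgeGraph.ConnectedComponent}
    (hcc : c' ≠ c) {o oT : V → V → Prop} (hoT : OrientsEdges (G.compEdges c) oT) :
    inheritO G c' (replaceO G c o oT) = inheritO G c' o := by
  funext u v
  apply propext
  constructor
  · rintro ⟨(⟨h1, -⟩ | hT), hu, hv⟩
    · exact ⟨h1, hu, hv⟩
    · obtain ⟨-, hu', -⟩ := oT_mem_supp hoT hT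
      rw [SimpleGraph.ConnectedComponent.mem_supp_iff] at hu hu'
      exact absurd (hu ▸ hu') (Ne.symm (by simpa using hcc)).symm
  · rintro ⟨h1, hu, hv⟩
    refine ⟨Or.inl ⟨h1, ?_⟩, hu, hv⟩
    left
    rw [SimpleGraph.ConnectedComponent.mem_supp_iff] at hu ⊢
    intro hu'
    exact hcc (hu' ▸ hu ▸ rfl)

end MixedGraph
end Aux14
section Aux14B
variable {V : Type*} [Fintype V] [DecidableEq V]
open MixedGraph

lemma chain_replace (G : MixedGraph V) (w : V → ℕ) (δ : ℝ)
    (𝒯 : ∀ _ : G.edgeGraph.ConnectedComponent, Set (V → V → Prop))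
    (h𝒯 : ∀ c, IsApproxReplacementSet G w c δ (𝒯 c)) :
    ∀ (L : List G.edgeGraph.ConnectedComponent), L.Nodup →
      ∀ o, OrientsEdges (G.edges : Set (Sym2 V)) o →
      ∃ o', OrientsEdges (G.edges : Set (Sym2 V)) o' ∧
        (Rw (G.dig o) w : ℝ) - L.length * (δ * (∑ v, (w v : ℝ)) ^ 2) ≤ Rw (G.dig o') w ∧
        (∀ c ∈ L, inheritO G c o' ∈ 𝒯 c) ∧
        (∀ c, c ∉ L → inheritO G c o' = inheritO G c o) := by
  intro L
  induction L with
  | nil =>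
    intro _ o ho
    exact ⟨o, ho, by simp, by simp, fun c _ => rfl⟩
  | cons c L ih =>
    intro hnd o ho
    obtain ⟨oT, hoTmem, hR⟩ := (h𝒯 c).2 o ho
    have hoT : OrientsEdges (G.compEdges c) oT := (h𝒯 c).1 oT hoTmem
    set o₁ := replaceO G c o oT with ho₁def
    have ho₁ : OrientsEdges (G.edges : Set (Sym2 V)) o₁ := replace_orients ho hoT
    obtain ⟨o', ho', hR', hmem', hpres'⟩ := ih (List.Nodup.of_cons hnd) o₁ ho₁
    have hcL : c ∉ L := (List.nodup_cons.mp hnd).1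
    refine ⟨o', ho', ?_, ?_, ?_⟩
    · have : (Rw (G.dig o₁) w : ℝ) - L.length * (δ * (∑ v, (w v : ℝ)) ^ 2)
          ≤ Rw (G.dig o') w := hR'
      push_cast [List.length_cons]
      push_cast at this hR
      nlinarith [this, hR]
    · intro c' hc'
      rcases List.mem_cons.mp hc' with rfl | hc'
      · rw [hpres' c' hcL, ho₁def, inherit_replace_self hoT]
        exact hoTmem
      · exact hmem' c' hc'
    · intro c' hc'
      have h1 : c' ∉ L := fun h => hc' (List.mem_cons_of_mem _ h)
      have h2 : c' ≠ c := fun h => hc' (h ▸ (List.mem_cons_self : c ∈ c :: L))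
      rw [hpres' c' h1, ho₁def, inherit_replace_other h2 hoT]

lemma exists_max_orientation (G : MixedGraph V) (w : V → ℕ) :
    ∃ o, OrientsEdges (G.edges : Set (Sym2 V)) o ∧
      ∀ o', OrientsEdges (G.edges : Set (Sym2 V)) o' →
        Rw (G.dig o') w ≤ Rw (G.dig o) w := by
  set s : Set ℕ := {n | ∃ o, OrientsEdges (G.edges : Set (Sym2 V)) o ∧ Rw (G.dig o) w = n}
    with hs
  have hne : s.Nonempty :=
    ⟨_, stdO (G.edges : Set (Sym2 V)),
      stdO_orients (fun e he => G.edges_not_diag e (Finset.mem_coe.mp he)), rfl⟩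
  have hbdd : BddAbove s := by
    refine ⟨2 * ∑ v, (w v).choose 2 + ∑ p ∈ Finset.univ.offDiag, w p.1 * w p.2, ?_⟩
    rintro n ⟨o, -, rfl⟩
    unfold Rw
    refine add_le_add le_rfl (Finset.sum_le_sum ?_)
    intro p _
    calc w p.1 * w p.2 * kappa (G.dig o) p.1 p.2 ≤ w p.1 * w p.2 * 1 := by
          exact Nat.mul_le_mul_left _ (kappa_le_one _ _ _)
      _ = w p.1 * w p.2 := by ring
  obtain ⟨o, ho, hR⟩ := Nat.sSup_mem hne hbdd
  refine ⟨o, ho, ?_⟩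
  intro o' ho'
  rw [hR]
  exact le_csSup hbdd ⟨o', ho', rfl⟩
end Aux14B
section Aux14C
set_option linter.unusedSectionVars false
variable {V : Type*} [Fintype V] [DecidableEq V]
open MixedGraph

noncomputable instance fintypeCC (G : SimpleGraph V) : Fintype G.ConnectedComponent :=
  letI := Classical.decEq G.ConnectedComponent
  Fintype.ofSurjective G.connectedComponentMk fun c => c.exists_rep

open Classical in
/-- the vertex set of the component `c` as a `Finset`. -/
noncomputable def sF (G : MixedGraph V) (c : G.edgeGraph.ConnectedComponent) : Finset V :=
  Finset.univ.filter fun v => G.edgeGraph.connectedComponentMk v = c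

lemma mem_sF {G : MixedGraph V} {c : G.edgeGraph.ConnectedComponent} {v : V} :
    v ∈ sF G c ↔ v ∈ c.supp := by
  simp [sF, SimpleGraph.ConnectedComponent.mem_supp_iff]

/-- total weight of component `c` -/
noncomputable def Wc (G : MixedGraph V) (c : G.edgeGraph.ConnectedComponent) (w : V → ℕ) : ℕ :=
  ∑ v ∈ sF G c, w v

open Classical in
/-- the contribution of pairs inside component `c` -/
noncomputable def Pc (G : MixedGraph V) (c : G.edgeGraph.ConnectedComponent)
    (r : V → V → Prop) (w : V → ℕ) : ℕ :=
  2 * ∑ v ∈ sF G c, (w v).choose 2 +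
    ∑ p ∈ (sF G c ×ˢ sF G c).filter (fun p => p.1 ≠ p.2),
      w p.1 * w p.2 * kappa r p.1 p.2

lemma Pc_mono {G : MixedGraph V} {c : G.edgeGraph.ConnectedComponent}
    {r r' : V → V → Prop} (h : ∀ a b, r a b → r' a b) (w : V → ℕ) :
    Pc G c r w ≤ Pc G c r' w := by
  unfold Pc
  refine add_le_add le_rfl (Finset.sum_le_sum fun p _ => ?_)
  exact Nat.mul_le_mul_left _ (kappa_mono h _ _)

lemma sum_Wc (G : MixedGraph V) (w : V → ℕ) :
    ∑ c, Wc G c w = ∑ v, w v := by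
  classical
  unfold Wc sF
  rw [← Finset.sum_fiberwise Finset.univ (fun v => G.edgeGraph.connectedComponentMk v) w]

lemma sum_choose_fiber (G : MixedGraph V) (w : V → ℕ) :
    ∑ c, ∑ v ∈ sF G c, (w v).choose 2 = ∑ v, (w v).choose 2 := by
  classical
  unfold sF
  rw [← Finset.sum_fiberwise Finset.univ (fun v => G.edgeGraph.connectedComponentMk v)
    (fun v => (w v).choose 2)]

lemma sum_Pc_le_Rw (G : MixedGraph V) (r : V → V → Prop) (w : V → ℕ) :
    ∑ c, Pc G c r w ≤ Rw r w := by
  classical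
  unfold Pc Rw
  rw [Finset.sum_add_distrib, ← Finset.mul_sum, sum_choose_fiber]
  refine add_le_add le_rfl ?_
  set t : V × V → ℕ := fun p => w p.1 * w p.2 * kappa r p.1 p.2 with ht
  set s : Finset (V × V) := Finset.univ.offDiag.filter
    (fun p => G.edgeGraph.connectedComponentMk p.1 = G.edgeGraph.connectedComponentMk p.2)
    with hsdef
  have h1 : ∀ c, (sF G c ×ˢ sF G c).filter (fun p => p.1 ≠ p.2)
      = s.filter (fun p => G.edgeGraph.connectedComponentMk p.1 = c) := by
    intro c
    ext p
    simp only [Finset.mem_filter, Finset.mem_product, mem_sF, hsdef, Finset.mem_offDiag,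
      Finset.mem_univ, true_and, SimpleGraph.ConnectedComponent.mem_supp_iff]
    constructor
    · rintro ⟨⟨h1, h2⟩, h3⟩
      exact ⟨⟨h3, h1.trans h2.symm⟩, h1⟩
    · rintro ⟨⟨h3, h12⟩, h1⟩
      exact ⟨⟨h1, h12.symm.trans h1⟩, h3⟩
  calc ∑ c, ∑ p ∈ (sF G c ×ˢ sF G c).filter (fun p => p.1 ≠ p.2), t p
      = ∑ c, ∑ p ∈ s.filter (fun p => G.edgeGraph.connectedComponentMk p.1 = c), t p := by
        refine Finset.sum_congr rfl fun c _ => ?_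
        rw [h1 c]
    _ = ∑ p ∈ s, t p := Finset.sum_fiberwise s _ t
    _ ≤ ∑ p ∈ Finset.univ.offDiag, t p :=
        Finset.sum_le_sum_of_subset (Finset.filter_subset _ _)

lemma glue_orientations (G : MixedGraph V)
    (F : ∀ _ : G.edgeGraph.ConnectedComponent, V → V → Prop)
    (hF : ∀ c, OrientsEdges (G.compEdges c) (F c)) :
    ∃ o, OrientsEdges (G.edges : Set (Sym2 V)) o ∧
      ∀ c u v, F c u v → G.dig o u v := by
  refine ⟨fun u v => F (G.edgeGraph.connectedComponentMk u) u v, ⟨?_, ?_⟩, ?_⟩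
  · intro u v h
    exact Finset.mem_coe.mpr (oT_mem_supp (hF _) h).1
  · intro u v h
    have h' : s(u, v) ∈ G.edges := Finset.mem_coe.mp h
    have hmk := edge_mk_eq h'
    set c := G.edgeGraph.connectedComponentMk u with hc
    have hu : u ∈ c.supp := by rw [SimpleGraph.ConnectedComponent.mem_supp_iff]
    have hv : v ∈ c.supp := by rw [SimpleGraph.ConnectedComponent.mem_supp_iff]; exact hmk.symm
    have hce : s(u, v) ∈ G.compEdges c := mem_compEdges.mpr ⟨h', hu, hv⟩
    show F (G.edgeGraph.connectedComponentMk u) u v ↔ ¬ F (G.edgeGraph.connectedComponentMk v) v u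
    rw [← hc, ← hmk]
    exact (hF c).2 u v hce
  · intro c u v h
    have hu : u ∈ c.supp := (oT_mem_supp (hF c) h).2.1
    rw [SimpleGraph.ConnectedComponent.mem_supp_iff] at hu
    show _ ∨ F (G.edgeGraph.connectedComponentMk u) u v
    rw [hu]
    exact Or.inr h

lemma exists_good_orientation (G : MixedGraph V) (w : V → ℕ)
    (treelem : ∀ c, ∃ oc, OrientsEdges (G.compEdges c) oc ∧
      (Wc G c w) ^ 2 ≤ 32 * Pc G c oc w + Wc G c w) :
    ∃ o, OrientsEdges (G.edges : Set (Sym2 V)) o ∧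
      ∑ c, (Wc G c w) ^ 2 ≤ 32 * Rw (G.dig o) w + ∑ v, w v := by
  choose F hF1 hF2 using treelem
  obtain ⟨o, ho, hle⟩ := glue_orientations G F hF1
  refine ⟨o, ho, ?_⟩
  calc ∑ c, (Wc G c w) ^ 2 ≤ ∑ c, (32 * Pc G c (F c) w + Wc G c w) :=
        Finset.sum_le_sum fun c _ => hF2 c
    _ = 32 * ∑ c, Pc G c (F c) w + ∑ c, Wc G c w := by
        rw [Finset.sum_add_distrib, Finset.mul_sum]
    _ ≤ 32 * ∑ c, Pc G c (G.dig o) w + ∑ v, w v := by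
        rw [sum_Wc]
        exact add_le_add (Nat.mul_le_mul_left _ (Finset.sum_le_sum fun c _ =>
          Pc_mono (hle c) w)) le_rfl
    _ ≤ 32 * Rw (G.dig o) w + ∑ v, w v :=
        add_le_add (Nat.mul_le_mul_left _ (sum_Pc_le_Rw G _ w)) le_rfl
end Aux14C
section Aux14D
set_option linter.unusedSectionVars false
variable {V : Type*} [Fintype V] [DecidableEq V]
open MixedGraph

/-- vertices incident to arcs, as a finset -/
def arcVF (G : MixedGraph V) : Finset V :=
  G.arcs.image Prod.fst ∪ G.arcs.image Prod.snd

lemma walk_cross {G : MixedGraph V} {c : G.edgeGraph.ConnectedComponent} :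
    ∀ {x z : V} (_ : G.UG.Walk x z),
      G.edgeGraph.connectedComponentMk x = c →
      G.edgeGraph.connectedComponentMk z ≠ c →
      ∃ a, G.edgeGraph.connectedComponentMk a = c ∧ a ∈ arcVF G := by
  intro x z p
  induction p with
  | nil => intro hx hz; exact absurd hx hz
  | @cons x y z h p ih =>
    intro hx hz
    rcases h with he | ha | ha
    · exact ih ((edge_mk_eq he).symm.trans hx) hz
    · refine ⟨x, hx, Finset.mem_union_left _ ?_⟩
      exact Finset.mem_image.mpr ⟨(x, y), ha, rfl⟩
    · refine ⟨x, hx, Finset.mem_union_right _ ?_⟩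
      exact Finset.mem_image.mpr ⟨(y, x), ha, rfl⟩

lemma card_CC_le (G : MixedGraph V) (hconn : G.UG.Connected) (hk : 1 ≤ G.arcs.card) :
    Fintype.card G.edgeGraph.ConnectedComponent ≤ 2 * G.arcs.card := by
  by_cases h2 : Fintype.card G.edgeGraph.ConnectedComponent ≤ 1
  · omega
  push_neg at h2
  have hvert : ∀ c : G.edgeGraph.ConnectedComponent,
      ∃ a, G.edgeGraph.connectedComponentMk a = c ∧ a ∈ arcVF G := by
    intro c
    obtain ⟨x, hx⟩ := c.exists_rep
    obtain ⟨c', hc'⟩ := Fintype.exists_ne_of_one_lt_card h2 c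
    obtain ⟨z, hz⟩ := c'.exists_rep
    have hr : G.UG.Reachable x z := hconn.preconnected x z
    refine walk_cross hr.some hx ?_
    show Quot.mk G.edgeGraph.Reachable z ≠ c
    rw [hz]; exact hc'
  choose f hf1 hf2 using hvert
  have h3 : Fintype.card G.edgeGraph.ConnectedComponent ≤ (arcVF G).card := by
    rw [← Finset.card_univ]
    refine Finset.card_le_card_of_injOn f (fun c _ => hf2 c) ?_
    intro c _ c' _ h
    rw [← hf1 c, ← hf1 c', h]
  refine h3.trans ?_
  refine (Finset.card_union_le _ _).trans ?_
  have := Finset.card_image_le (s := G.arcs) (f := Prod.fst)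
  have := Finset.card_image_le (s := G.arcs) (f := Prod.snd)
  omega
end Aux14D
section Aux14E
set_option linter.unusedSectionVars false
variable {V : Type*} [Fintype V] [DecidableEq V]
open MixedGraph

/-- adjacency in `H` with the vertex `v` deleted -/
def adjM (H : SimpleGraph V) (v : V) : V → V → Prop :=
  fun a b => H.Adj a b ∧ a ≠ v ∧ b ≠ v

lemma rtgM_symm {H : SimpleGraph V} {v a b : V}
    (h : Relation.ReflTransGen (adjM H v) a b) : Relation.ReflTransGen (adjM H v) b a :=
  by haveI : Std.Symm (adjM H v) := ⟨fun _ _ h => ⟨h.1.symm, h.2.2, h.2.1⟩⟩; exact Std.Symm.symm _ _ h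

lemma rtgM_ne {H : SimpleGraph V} {v a b : V} (ha : a ≠ v)
    (h : Relation.ReflTransGen (adjM H v) a b) : b ≠ v := by
  induction h with
  | refl => exact ha
  | tail _ h2 _ => exact h2.2.2

lemma rtgM_reachable {H : SimpleGraph V} {v a b : V}
    (h : Relation.ReflTransGen (adjM H v) a b) : H.Reachable a b :=
  (SimpleGraph.reachable_iff_reflTransGen a b).mpr (Relation.ReflTransGen.mono (fun _ _ hh => hh.1) _ _ h)

lemma walk_avoid_rtgM {H : SimpleGraph V} {v : V} :
    ∀ {a b : V} (p : H.Walk a b), v ∉ p.support → Relation.ReflTransGen (adjM H v) a b := by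
  intro a b p
  induction p with
  | nil => intro _; exact Relation.ReflTransGen.refl
  | @cons x y z h p ih =>
    intro hv
    rw [SimpleGraph.Walk.support_cons, List.mem_cons] at hv
    push_neg at hv
    refine Relation.ReflTransGen.head ⟨h, fun hx => hv.1 hx.symm, fun hy => ?_⟩ (ih hv.2)
    exact hv.2 (hy ▸ p.start_mem_support)

lemma rtgM_walk_avoid {H : SimpleGraph V} {v a b : V} (ha : a ≠ v)
    (h : Relation.ReflTransGen (adjM H v) a b) :
    ∃ p : H.Walk a b, v ∉ p.support := by
  induction h with
  | refl => exact ⟨SimpleGraph.Walk.nil, by simp [ha.symm]⟩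
  | @tail x y hxy h2 ih =>
    obtain ⟨p, hp⟩ := ih
    refine ⟨p.concat h2.1, ?_⟩
    rw [SimpleGraph.Walk.support_concat]
    simp only [List.concat_eq_append, List.mem_append, List.mem_singleton]
    rintro (hv | hv)
    · exact hp hv
    · exact h2.2.2 hv.symm

/-- from `u ≠ v`, a walk `u → v` yields a neighbor `z` of `v` in the deleted-vertex
component of `u`. -/
lemma exists_attach {H : SimpleGraph V} {v : V} :
    ∀ {u : V} (_ : H.Walk u v), u ≠ v →
      ∃ z, H.Adj v z ∧ Relation.ReflTransGen (adjM H v) u z := by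
  intro u p
  induction p with
  | nil => intro h; exact absurd rfl h
  | @cons x y z h p ih =>
    intro hu
    by_cases hyv : y = z
    · subst hyv
      exact ⟨x, (h.symm : H.Adj y x), Relation.ReflTransGen.refl⟩
    · obtain ⟨w, hw1, hw2⟩ := ih hyv
      exact ⟨w, hw1, Relation.ReflTransGen.head ⟨h, hu, hyv⟩ hw2⟩

lemma exists_closer_neighbor {H : SimpleGraph V} {v a : V} (ha : a ≠ v)
    (hr : H.Reachable v a) : ∃ b, H.Adj a b ∧ H.dist v b < H.dist v a := by
  have hd : H.dist v a ≠ 0 :=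
    SimpleGraph.dist_ne_zero_iff_ne_and_reachable.mpr ⟨ha.symm, hr⟩
  obtain ⟨p, hp⟩ := hr.exists_walk_length_eq_dist
  obtain ⟨b, hadj, p', hp'⟩ := SimpleGraph.Walk.exists_eq_cons_of_ne ha p.reverse
  refine ⟨b, hadj, ?_⟩
  have h1 : H.dist v b ≤ p'.reverse.length := SimpleGraph.dist_le p'.reverse
  have h2 : p.reverse.length = p'.length + 1 := by rw [hp']; simp
  rw [SimpleGraph.Walk.length_reverse] at h2
  rw [SimpleGraph.Walk.length_reverse] at h1
  omega

/-- in a forest, adjacent vertices have distinct distances from any vertex that can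
reach them -/
lemma dist_ne_of_adj {H : SimpleGraph V} (hforest : H.IsAcyclic) {v a b : V}
    (hadj : H.Adj a b) (hra : H.Reachable v a) : H.dist v a ≠ H.dist v b := by
  intro heq
  have hrb : H.Reachable v b := hra.trans hadj.reachable
  obtain ⟨pa, hpa⟩ := hra.exists_walk_length_eq_dist
  obtain ⟨pb, hpb⟩ := hrb.exists_walk_length_eq_dist
  have hpaP : pa.IsPath := pa.isPath_of_length_eq_dist hpa
  have hpbP : pb.IsPath := pb.isPath_of_length_eq_dist hpb
  have hbna : b ∉ pa.support := by
    intro hb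
    have hsplit := congrArg SimpleGraph.Walk.length (pa.take_spec hb)
    rw [SimpleGraph.Walk.length_append] at hsplit
    have hdropne : (pa.dropUntil b hb).length ≠ 0 := by
      intro h0
      exact hadj.ne (SimpleGraph.Walk.eq_of_length_eq_zero h0).symm
    have hdb : H.dist v b ≤ (pa.takeUntil b hb).length := SimpleGraph.dist_le _
    omega
  have hw : (pa.concat hadj).IsPath := by
    rw [← SimpleGraph.Walk.isPath_reverse_iff, SimpleGraph.Walk.reverse_concat]
    rw [SimpleGraph.Walk.cons_isPath_iff]
    refine ⟨by rwa [SimpleGraph.Walk.isPath_reverse_iff], ?_⟩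
    rwa [SimpleGraph.Walk.support_reverse, List.mem_reverse]
  have huniq := SimpleGraph.isAcyclic_iff_path_unique.mp hforest
    ⟨pa.concat hadj, hw⟩ ⟨pb, hpbP⟩
  have hlen : (pa.concat hadj).length = pb.length :=
    congrArg SimpleGraph.Walk.length (congrArg Subtype.val huniq)
  rw [SimpleGraph.Walk.length_concat, hpa, hpb] at hlen
  omega
end Aux14E
section Aux14F
set_option linter.unusedSectionVars false
variable {V : Type*} [Fintype V] [DecidableEq V]
open MixedGraph

open Classical in
/-- the component of `u` in `H − v`, as a finset -/
noncomputable def SFin (H : SimpleGraph V) (v u : V) : Finset V :=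
  Finset.univ.filter fun x => Relation.ReflTransGen (adjM H v) u x

lemma mem_SFin {H : SimpleGraph V} {v u x : V} :
    x ∈ SFin H v u ↔ Relation.ReflTransGen (adjM H v) u x := by
  simp [SFin]

lemma self_mem_SFin {H : SimpleGraph V} (v u : V) : u ∈ SFin H v u :=
  mem_SFin.mpr Relation.ReflTransGen.refl

lemma SFin_eq_of_mem {H : SimpleGraph V} {v u x : V} (h : x ∈ SFin H v u) :
    SFin H v x = SFin H v u := by
  rw [mem_SFin] at h
  ext y
  rw [mem_SFin, mem_SFin]
  exact ⟨fun hy => h.trans hy, fun hy => (rtgM_symm h).trans hy⟩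

lemma ne_of_mem_SFin {H : SimpleGraph V} {v u x : V} (hu : u ≠ v) (h : x ∈ SFin H v u) :
    x ≠ v := rtgM_ne hu (mem_SFin.mp h)

/-- key disjointness: the component of `v` in `H − v'` avoids the component `K` of `u`
in `H − v`, where `v'` is a neighbor of `v` inside `K` (uses acyclicity) -/
lemma disj_SFin {H : SimpleGraph V} (hforest : H.IsAcyclic) {v v' u : V}
    (hu : u ≠ v) (hadj : H.Adj v v') (hv' : v' ∈ SFin H v u) :
    ∀ x, x ∈ SFin H v' v → x ∉ SFin H v u := by
  intro x hx1 hx2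
  have hxv : x ≠ v := ne_of_mem_SFin hu hx2
  have hvv' : v ≠ v' := hadj.ne
  obtain ⟨p0, hp0⟩ := rtgM_walk_avoid hvv' (mem_SFin.mp hx1)
  set p := p0.bypass with hpdef
  have hpP : p.IsPath := p0.bypass_isPath
  have hpv' : v' ∉ p.support := fun h => hp0 (p0.support_bypass_subset h)
  obtain ⟨z, hvz, p', hp'⟩ := SimpleGraph.Walk.exists_eq_cons_of_ne (Ne.symm hxv) p
  have hp'P : p'.IsPath ∧ v ∉ p'.support := by
    rw [hp', SimpleGraph.Walk.cons_isPath_iff] at hpP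
    exact hpP
  have hzx : Relation.ReflTransGen (adjM H v) z x := walk_avoid_rtgM p' hp'P.2
  have hz_mem : z ∈ SFin H v u := by
    rw [mem_SFin]
    exact (mem_SFin.mp hx2).trans (rtgM_symm hzx)
  have hzv' : z ≠ v' := by
    intro h
    apply hpv'
    rw [hp', SimpleGraph.Walk.support_cons]
    exact List.mem_cons_of_mem _ (h ▸ p'.start_mem_support)
  -- two distinct neighbors of v inside the same component of H − v: cycle
  have hrtg : Relation.ReflTransGen (adjM H v) v' z :=
    (rtgM_symm (mem_SFin.mp hv')).trans (mem_SFin.mp hz_mem)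
  obtain ⟨q0, hq0⟩ := rtgM_walk_avoid (hadj.ne') hrtg
  set q := q0.bypass with hqdef
  have hqP : q.IsPath := q0.bypass_isPath
  have hqv : v ∉ q.support := fun h => hq0 (q0.support_bypass_subset h)
  have hP2 : (SimpleGraph.Walk.cons hadj q).IsPath := by
    rw [SimpleGraph.Walk.cons_isPath_iff]
    exact ⟨hqP, hqv⟩
  have hP1 : (SimpleGraph.Walk.cons hvz SimpleGraph.Walk.nil).IsPath := by
    rw [SimpleGraph.Walk.cons_isPath_iff]
    simp [hvz.ne]
  have huniq := SimpleGraph.isAcyclic_iff_path_unique.mp hforest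
    ⟨SimpleGraph.Walk.cons hadj q, hP2⟩ ⟨SimpleGraph.Walk.cons hvz SimpleGraph.Walk.nil, hP1⟩
  have hlen := congrArg SimpleGraph.Walk.length (congrArg Subtype.val huniq)
  simp only [SimpleGraph.Walk.length_cons, SimpleGraph.Walk.length_nil] at hlen
  have hq0len : q.length = 0 := by omega
  exact hzv' ((SimpleGraph.Walk.eq_of_length_eq_zero (p := q) hq0len).symm)

/-- vertices outside the component of `v` in `H − v'` lie in `K` (no acyclicity
needed) -/
lemma core_SFin {H : SimpleGraph V} {v v' u x : V}
    (hv' : v' ∈ SFin H v u) (hu : u ≠ v) (hrx : H.Reachable x v)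
    (hx1 : x ≠ v') (hx2 : x ∉ SFin H v' v) : x ∈ SFin H v u := by
  have hxv : x ≠ v := by
    rintro rfl
    exact hx2 (self_mem_SFin _ _)
  obtain ⟨p0⟩ := hrx
  set p := p0.bypass with hpdef
  have hpP : p.IsPath := p0.bypass_isPath
  by_cases hv'p : v' ∈ p.support
  · -- take the prefix up to v'
    set q := p.takeUntil v' hv'p with hqdef
    have hvq : v ∉ q.support := by
      intro hvq
      have hspec := p.take_spec hv'p
      have hnodup := hpP.support_nodup
      rw [← hspec, SimpleGraph.Walk.support_append, List.nodup_append] at hnodup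
      have hvd : v ∈ (p.dropUntil v' hv'p).support.tail := by
        have hvd1 : v ∈ (p.dropUntil v' hv'p).support :=
          SimpleGraph.Walk.end_mem_support _
        rw [SimpleGraph.Walk.support_eq_cons] at hvd1
        rcases List.mem_cons.mp hvd1 with h | h
        · exact absurd h.symm (ne_of_mem_SFin hu hv')
        · exact h
      exact hnodup.2.2 v hvq v hvd rfl
    have : Relation.ReflTransGen (adjM H v) x v' := walk_avoid_rtgM q hvq
    rw [mem_SFin]
    exact (mem_SFin.mp hv').trans (rtgM_symm this)
  · -- the walk avoids v', so x is in the component of v in H − v'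
    exfalso
    apply hx2
    rw [mem_SFin]
    exact rtgM_symm (walk_avoid_rtgM p hv'p)
lemma SFin_subset_sF {G : MixedGraph V} {c : G.edgeGraph.ConnectedComponent} {v u : V}
    (hu : u ∈ sF G c) : SFin G.edgeGraph v u ⊆ sF G c := by
  intro x hx
  rw [mem_sF, SimpleGraph.ConnectedComponent.mem_supp_iff] at hu ⊢
  rw [← hu]
  exact SimpleGraph.ConnectedComponent.eq.mpr (rtgM_reachable (mem_SFin.mp hx)).symm

lemma reachable_of_mem_sF {G : MixedGraph V} {c : G.edgeGraph.ConnectedComponent} {u v : V}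
    (hu : u ∈ sF G c) (hv : v ∈ sF G c) : G.edgeGraph.Reachable u v := by
  rw [mem_sF, SimpleGraph.ConnectedComponent.mem_supp_iff] at hu hv
  exact SimpleGraph.ConnectedComponent.eq.mp (hu.trans hv.symm)

lemma centroid_exists (G : MixedGraph V) (hforest : G.edgeGraph.IsAcyclic)
    (w : V → ℕ) (c : G.edgeGraph.ConnectedComponent) (hc : (sF G c).Nonempty) :
    ∃ v ∈ sF G c, ∀ u ∈ sF G c, u ≠ v →
      2 * ∑ x ∈ SFin G.edgeGraph v u, w x ≤ Wc G c w := by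
  obtain ⟨v0, hv0⟩ := hc
  suffices h : ∀ (n : ℕ) (v : V), v ∈ sF G c →
      (∀ u, u ∈ sF G c → u ≠ v → Wc G c w < 2 * ∑ x ∈ SFin G.edgeGraph v u, w x →
        (SFin G.edgeGraph v u).card ≤ n) →
      ∃ v' ∈ sF G c, ∀ u ∈ sF G c, u ≠ v' →
        2 * ∑ x ∈ SFin G.edgeGraph v' u, w x ≤ Wc G c w by
    exact h (Fintype.card V) v0 hv0
      (fun u _ _ _ => (Finset.card_le_univ _).trans (by simp))
  intro n
  induction n with
  | zero =>
    intro v hv hcard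
    refine ⟨v, hv, ?_⟩
    intro u hu hne
    by_contra hlt
    push_neg at hlt
    have h1 := hcard u hu hne hlt
    have h2 : 0 < (SFin G.edgeGraph v u).card :=
      Finset.card_pos.mpr ⟨u, self_mem_SFin _ _⟩
    omega
  | succ n ih =>
    intro v hv hcard
    by_cases hbad : ∃ u, u ∈ sF G c ∧ u ≠ v ∧
        Wc G c w < 2 * ∑ x ∈ SFin G.edgeGraph v u, w x
    · obtain ⟨u, hu, hune, hbadu⟩ := hbad
      have hru : G.edgeGraph.Reachable u v := reachable_of_mem_sF hu hv
      obtain ⟨v', hadj, hrtg⟩ := exists_attach hru.some hune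
      have hv'K : v' ∈ SFin G.edgeGraph v u := mem_SFin.mpr hrtg
      have hv'c : v' ∈ sF G c := SFin_subset_sF hu hv'K
      apply ih v' hv'c
      intro u' hu' hune' hbadu'
      set K := SFin G.edgeGraph v u with hKdef
      set Kv := SFin G.edgeGraph v' v with hKvdef
      have hdisj : Disjoint Kv K := by
        rw [Finset.disjoint_left]
        intro x hx1 hx2
        exact disj_SFin hforest hune hadj hv'K x hx1 hx2
      have hKsub : K ⊆ sF G c := SFin_subset_sF hu
      have hKvsub : Kv ⊆ sF G c := SFin_subset_sF hv
      have hsum : ∑ x ∈ Kv, w x + ∑ x ∈ K, w x ≤ Wc G c w := by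
        rw [← Finset.sum_union hdisj]
        exact Finset.sum_le_sum_of_subset (Finset.union_subset hKvsub hKsub)
      have hu'notKv : u' ∉ Kv := by
        intro hmem
        have heq : SFin G.edgeGraph v' u' = Kv := SFin_eq_of_mem hmem
        rw [heq] at hbadu'
        omega
      have hsubset : SFin G.edgeGraph v' u' ⊆ K.erase v' := by
        intro x hx
        have hxne : x ≠ v' := ne_of_mem_SFin hune' hx
        have hxKv : x ∉ Kv := by
          intro hmem
          apply hu'notKv
          have heq : SFin G.edgeGraph v' x = SFin G.edgeGraph v' u' := SFin_eq_of_mem hx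
          show u' ∈ SFin G.edgeGraph v' v
          rw [← SFin_eq_of_mem hmem, heq]
          exact self_mem_SFin _ _
        have hrxv : G.edgeGraph.Reachable x v :=
          ((rtgM_reachable (mem_SFin.mp hx)).symm).trans (reachable_of_mem_sF hu' hv)
        exact Finset.mem_erase.mpr ⟨hxne, core_SFin hv'K hune hrxv hxne hxKv⟩
      have hcardK : K.card ≤ n + 1 := hcard u hu hune hbadu
      have h1 : (SFin G.edgeGraph v' u').card ≤ (K.erase v').card :=
        Finset.card_le_card hsubset
      have h2 : (K.erase v').card = K.card - 1 := Finset.card_erase_of_mem hv'K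
      have h3 : 0 < K.card := Finset.card_pos.mpr ⟨v', hv'K⟩
      omega
    · push_neg at hbad
      exact ⟨v, hv, fun u hu hne => hbad u hu hne⟩

lemma exists_split (G : MixedGraph V) (w : V → ℕ) (c : G.edgeGraph.ConnectedComponent)
    {v : V} (hv : v ∈ sF G c)
    (hcent : ∀ u ∈ sF G c, u ≠ v →
      2 * ∑ x ∈ SFin G.edgeGraph v u, w x ≤ Wc G c w) :
    (∃ Z : Finset V, Z ⊆ sF G c ∧ v ∉ Z ∧
      (∀ a b, a ∈ Z → Relation.ReflTransGen (adjM G.edgeGraph v) a b → b ∈ Z) ∧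
      Wc G c w ≤ 4 * ∑ x ∈ Z, w x ∧ 4 * ∑ x ∈ Z, w x ≤ 3 * Wc G c w) ∨
    3 * Wc G c w ≤ 4 * w v := by
  classical
  set W := Wc G c w with hW
  set P := (sF G c).powerset.filter (fun Z =>
    (∀ a b, a ∈ Z → Relation.ReflTransGen (adjM G.edgeGraph v) a b → b ∈ Z) ∧
    v ∉ Z ∧ 4 * ∑ x ∈ Z, w x ≤ 3 * W) with hP
  have hmemP : ∀ Z : Finset V, Z ∈ P ↔ Z ⊆ sF G c ∧
      ((∀ a b, a ∈ Z → Relation.ReflTransGen (adjM G.edgeGraph v) a b → b ∈ Z) ∧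
      v ∉ Z ∧ 4 * ∑ x ∈ Z, w x ≤ 3 * W) := by
    intro Z
    rw [hP, Finset.mem_filter, Finset.mem_powerset]
  have hne : (∅ : Finset V) ∈ P := by
    rw [hmemP]
    refine ⟨Finset.empty_subset _, ?_, ?_, by simp⟩
    · intro a b ha
      exact absurd ha (Finset.notMem_empty a)
    · exact Finset.notMem_empty v
  obtain ⟨Z, hZP, hZmax⟩ := P.exists_max_image (fun Z => ∑ x ∈ Z, w x) ⟨∅, hne⟩
  rw [hmemP] at hZP
  obtain ⟨hZsub, hZcl, hZv, hZ3⟩ := hZP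
  by_cases hcase : W ≤ 4 * ∑ x ∈ Z, w x
  · exact Or.inl ⟨Z, hZsub, hZv, hZcl, hcase, hZ3⟩
  · right
    push_neg at hcase
    have hzero : ∀ u ∈ sF G c, u ∉ Z → u ≠ v → w u = 0 := by
      intro u hu hZu hune
      by_contra h0
      set K := SFin G.edgeGraph v u with hK
      have hKsub : K ⊆ sF G c := SFin_subset_sF hu
      have hdisj : Disjoint Z K := by
        rw [Finset.disjoint_left]
        intro x hx1 hx2
        exact hZu (hZcl x u hx1 (rtgM_symm (mem_SFin.mp hx2)))
      have hKw : 2 * ∑ x ∈ K, w x ≤ W := hcent u hu hune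
      have hZK : Z ∪ K ∈ P := by
        rw [hmemP]
        refine ⟨Finset.union_subset hZsub hKsub, ?_, ?_, ?_⟩
        · intro a b ha hab
          rcases Finset.mem_union.mp ha with ha | ha
          · exact Finset.mem_union_left _ (hZcl a b ha hab)
          · exact Finset.mem_union_right _ (mem_SFin.mpr
              ((mem_SFin.mp ha).trans hab))
        · rw [Finset.mem_union]
          rintro (h | h)
          · exact hZv h
          · exact (ne_of_mem_SFin hune h) rfl
        · rw [Finset.sum_union hdisj]
          omega
      have hle := hZmax _ hZK
      rw [Finset.sum_union hdisj] at hle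
      have hK0 : ∑ x ∈ K, w x = 0 := by omega
      have : w u ≤ ∑ x ∈ K, w x :=
        Finset.single_le_sum (fun x _ => Nat.zero_le _) (self_mem_SFin v u)
      omega
    have hWsplit : W = w v + ∑ x ∈ (sF G c).erase v, w x := by
      rw [hW]
      unfold Wc
      rw [← Finset.add_sum_erase _ _ (mem_sF.mpr (mem_sF.mp hv))]
    have hZsub' : Z ⊆ (sF G c).erase v := by
      intro x hx
      exact Finset.mem_erase.mpr ⟨fun h => hZv (h ▸ hx), hZsub hx⟩
    have hrest : ∑ x ∈ (sF G c).erase v \ Z, w x = 0 := by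
      refine Finset.sum_eq_zero ?_
      intro x hx
      rw [Finset.mem_sdiff, Finset.mem_erase] at hx
      exact hzero x hx.1.2 hx.2 hx.1.1
    have hsplit2 : ∑ x ∈ (sF G c).erase v, w x
        = ∑ x ∈ Z, w x + ∑ x ∈ (sF G c).erase v \ Z, w x := by
      rw [← Finset.sum_sdiff hZsub']
      ring
    omega
/-- orientation of component `c`: edges on the `Z`-side point towards `v` (distance
decreasing), other edges point away from `v` -/
def ocOf (G : MixedGraph V) (c : G.edgeGraph.ConnectedComponent)
    (v : V) (Z : Finset V) : V → V → Prop :=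
  fun a b => G.edgeGraph.Adj a b ∧ a ∈ c.supp ∧
    ((a ∈ Z ∨ b ∈ Z) ∧ G.edgeGraph.dist v b < G.edgeGraph.dist v a ∨
     (a ∉ Z ∧ b ∉ Z) ∧ G.edgeGraph.dist v a < G.edgeGraph.dist v b)

lemma adj_mem_sF {G : MixedGraph V} {c : G.edgeGraph.ConnectedComponent} {a b : V}
    (hadj : G.edgeGraph.Adj a b) (ha : a ∈ c.supp) : b ∈ c.supp := by
  rw [SimpleGraph.ConnectedComponent.mem_supp_iff] at ha ⊢
  rw [← ha]
  exact (SimpleGraph.ConnectedComponent.eq.mpr hadj.reachable).symm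

lemma ocOf_orients {G : MixedGraph V} (hforest : G.edgeGraph.IsAcyclic)
    {c : G.edgeGraph.ConnectedComponent} {v : V} {Z : Finset V} (hv : v ∈ sF G c) :
    OrientsEdges (G.compEdges c) (ocOf G c v Z) := by
  constructor
  · rintro a b ⟨hadj, hsupp, -⟩
    exact mem_compEdges.mpr ⟨hadj, hsupp, adj_mem_sF hadj hsupp⟩
  · intro a b hmem
    obtain ⟨he, hsa, hsb⟩ := mem_compEdges.mp hmem
    have hadj : G.edgeGraph.Adj a b := he
    have hra : G.edgeGraph.Reachable v a := reachable_of_mem_sF hv (mem_sF.mpr hsa)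
    have hd := dist_ne_of_adj hforest hadj hra
    constructor
    · rintro ⟨-, -, h⟩ ⟨-, -, h'⟩
      rcases h with ⟨hz, hlt⟩ | ⟨hz, hlt⟩ <;> rcases h' with ⟨hz', hlt'⟩ | ⟨hz', hlt'⟩
      · omega
      · tauto
      · tauto
      · omega
    · intro hn
      refine ⟨hadj, hsa, ?_⟩
      by_cases hz : a ∈ Z ∨ b ∈ Z
      · left
        refine ⟨hz, ?_⟩
        rcases lt_or_gt_of_ne hd with hlt | hlt
        · exact absurd ⟨hadj.symm, hsb, Or.inl ⟨hz.symm, hlt⟩⟩ hn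
        · exact hlt
      · push_neg at hz
        rcases lt_or_gt_of_ne hd with hlt | hlt
        · exact Or.inr ⟨⟨hz.1, hz.2⟩, hlt⟩
        · exact absurd ⟨hadj.symm, hsb, Or.inr ⟨⟨hz.2, hz.1⟩, hlt⟩⟩ hn

lemma ocOf_reach_to {G : MixedGraph V} {c : G.edgeGraph.ConnectedComponent} {v : V}
    {Z : Finset V} (hv : v ∈ sF G c) (hZsub : Z ⊆ sF G c) (hZv : v ∉ Z)
    (hZcl : ∀ a b, a ∈ Z → Relation.ReflTransGen (adjM G.edgeGraph v) a b → b ∈ Z) :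
    ∀ x ∈ Z, Relation.ReflTransGen (ocOf G c v Z) x v := by
  suffices h : ∀ n, ∀ x ∈ Z, G.edgeGraph.dist v x ≤ n →
      Relation.ReflTransGen (ocOf G c v Z) x v by
    intro x hx
    exact h (G.edgeGraph.dist v x) x hx le_rfl
  intro n
  induction n with
  | zero =>
    intro x hx hd
    have hxv : x ≠ v := fun h => hZv (h ▸ hx)
    have hr : G.edgeGraph.Reachable v x := reachable_of_mem_sF hv (hZsub hx)
    have := SimpleGraph.dist_ne_zero_iff_ne_and_reachable.mpr ⟨hxv.symm, hr⟩
    omega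
  | succ n ih =>
    intro x hx hd
    have hxv : x ≠ v := fun h => hZv (h ▸ hx)
    have hr : G.edgeGraph.Reachable v x := reachable_of_mem_sF hv (hZsub hx)
    obtain ⟨b, hadj, hblt⟩ := exists_closer_neighbor hxv hr
    have hoc : ocOf G c v Z x b :=
      ⟨hadj, mem_sF.mp (hZsub hx), Or.inl ⟨Or.inl hx, hblt⟩⟩
    by_cases hbv : b = v
    · exact Relation.ReflTransGen.single (hbv ▸ hoc)
    · have hbZ : b ∈ Z := hZcl x b hx (Relation.ReflTransGen.single ⟨hadj, hxv, hbv⟩)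
      exact Relation.ReflTransGen.head hoc (ih b hbZ (by omega))

lemma ocOf_reach_from {G : MixedGraph V} {c : G.edgeGraph.ConnectedComponent} {v : V}
    {Z : Finset V} (hv : v ∈ sF G c) (hZsub : Z ⊆ sF G c) (hZv : v ∉ Z)
    (hZcl : ∀ a b, a ∈ Z → Relation.ReflTransGen (adjM G.edgeGraph v) a b → b ∈ Z) :
    ∀ y ∈ sF G c, y ∉ Z → Relation.ReflTransGen (ocOf G c v Z) v y := by
  suffices h : ∀ n, ∀ y ∈ sF G c, y ∉ Z → G.edgeGraph.dist v y ≤ n →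
      Relation.ReflTransGen (ocOf G c v Z) v y by
    intro y hy hyZ
    exact h (G.edgeGraph.dist v y) y hy hyZ le_rfl
  intro n
  induction n with
  | zero =>
    intro y hy hyZ hd
    by_cases hyv : y = v
    · exact hyv ▸ Relation.ReflTransGen.refl
    · have hr : G.edgeGraph.Reachable v y := reachable_of_mem_sF hv hy
      have := SimpleGraph.dist_ne_zero_iff_ne_and_reachable.mpr
        ⟨fun h => hyv h.symm, hr⟩
      omega
  | succ n ih =>
    intro y hy hyZ hd
    by_cases hyv : y = v
    · exact hyv ▸ Relation.ReflTransGen.refl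
    · have hr : G.edgeGraph.Reachable v y := reachable_of_mem_sF hv hy
      obtain ⟨b, hadj, hblt⟩ := exists_closer_neighbor hyv hr
      have hbs : b ∈ sF G c := by
        rw [mem_sF]
        exact adj_mem_sF hadj (mem_sF.mp hy)
      have hbZ : b ∉ Z := by
        by_cases hbv : b = v
        · exact hbv ▸ hZv
        · intro hbmem
          exact hyZ (hZcl b y hbmem (Relation.ReflTransGen.single ⟨hadj.symm, hbv, hyv⟩))
      have hoc : ocOf G c v Z b y :=
        ⟨hadj.symm, mem_sF.mp hbs, Or.inr ⟨⟨hbZ, hyZ⟩, hblt⟩⟩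
      exact Relation.ReflTransGen.tail (ih b hbs hbZ (by omega)) hoc

lemma two_mul_choose_two (n : ℕ) : 2 * n.choose 2 = n * (n - 1) := by
  rcases n with _ | m
  · simp
  · have h2 : 2 ∣ (m + 1) * m := by
      rw [Nat.mul_comm]
      exact (Nat.even_mul_succ_self m).two_dvd
    rw [Nat.choose_two_right, Nat.succ_sub_one, Nat.mul_div_cancel' h2]

lemma tree_lemma (G : MixedGraph V) (hforest : G.edgeGraph.IsAcyclic) (w : V → ℕ)
    (c : G.edgeGraph.ConnectedComponent) :
    ∃ oc, OrientsEdges (G.compEdges c) oc ∧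
      (Wc G c w) ^ 2 ≤ 32 * Pc G c oc w + Wc G c w := by
  obtain ⟨v0, hv0⟩ := c.exists_rep
  have hne : (sF G c).Nonempty := ⟨v0, mem_sF.mpr (by
    rw [SimpleGraph.ConnectedComponent.mem_supp_iff]; exact hv0)⟩
  obtain ⟨v, hv, hcent⟩ := centroid_exists G hforest w c hne
  have hcompnd : ∀ e ∈ G.compEdges c, ¬ e.IsDiag := fun e he => G.edges_not_diag e he.1
  rcases exists_split G w c hv hcent with ⟨Z, hZsub, hZv, hZcl, h1, h2⟩ | hbig
  · refine ⟨ocOf G c v Z, ocOf_orients hforest hv, ?_⟩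
    set X := ∑ x ∈ Z, w x with hX
    set Y := ∑ y ∈ sF G c \ Z, w y with hY
    have hXY : Y + X = Wc G c w := Finset.sum_sdiff hZsub
    have hpairs : X * Y ≤ Pc G c (ocOf G c v Z) w := by
      have hsub : Z ×ˢ (sF G c \ Z) ⊆
          (sF G c ×ˢ sF G c).filter (fun p => p.1 ≠ p.2) := by
        rintro ⟨x, y⟩ hp
        rw [Finset.mem_product] at hp
        rw [Finset.mem_filter, Finset.mem_product]
        have hyZ := Finset.mem_sdiff.mp hp.2
        exact ⟨⟨hZsub hp.1, hyZ.1⟩, fun h => hyZ.2 (h ▸ hp.1)⟩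
      have hkap : ∀ p ∈ Z ×ˢ (sF G c \ Z), w p.1 * w p.2 * kappa (ocOf G c v Z) p.1 p.2
          = w p.1 * w p.2 := by
        rintro ⟨x, y⟩ hp
        rw [Finset.mem_product] at hp
        have hyZ := Finset.mem_sdiff.mp hp.2
        have hk : Relation.ReflTransGen (ocOf G c v Z) x y :=
          (ocOf_reach_to hv hZsub hZv hZcl x hp.1).trans
            (ocOf_reach_from hv hZsub hZv hZcl y hyZ.1 hyZ.2)
        rw [kappa_eq_one hk, mul_one]
      calc X * Y = ∑ p ∈ Z ×ˢ (sF G c \ Z), w p.1 * w p.2 := by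
            rw [Finset.sum_product, hX, hY, Finset.sum_mul_sum]
        _ = ∑ p ∈ Z ×ˢ (sF G c \ Z), w p.1 * w p.2 * kappa (ocOf G c v Z) p.1 p.2 :=
            (Finset.sum_congr rfl hkap).symm
        _ ≤ ∑ p ∈ (sF G c ×ˢ sF G c).filter (fun p => p.1 ≠ p.2),
              w p.1 * w p.2 * kappa (ocOf G c v Z) p.1 p.2 :=
            Finset.sum_le_sum_of_subset hsub
        _ ≤ Pc G c (ocOf G c v Z) w := Nat.le_add_left _ _
    have h3 : Wc G c w ≤ 4 * Y := by omega
    nlinarith [Nat.mul_le_mul h1 h3, hpairs]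
  · refine ⟨stdO (G.compEdges c), stdO_orients hcompnd, ?_⟩
    have hchoose : w v * (w v - 1) ≤ Pc G c (stdO (G.compEdges c)) w := by
      rw [← two_mul_choose_two]
      calc 2 * (w v).choose 2 ≤ 2 * ∑ x ∈ sF G c, (w x).choose 2 :=
            Nat.mul_le_mul_left _ (Finset.single_le_sum
              (f := fun x => (w x).choose 2) (fun x _ => Nat.zero_le _) hv)
        _ ≤ Pc G c (stdO (G.compEdges c)) w := Nat.le_add_right _ _
    by_cases hW : Wc G c w ≤ 1
    · have : (Wc G c w) ^ 2 ≤ Wc G c w := by nlinarith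
      omega
    · push_neg at hW
      have hwv : 2 ≤ w v := by omega
      obtain ⟨m, hm⟩ : ∃ m, w v = m + 1 := ⟨w v - 1, by omega⟩
      rw [hm] at hchoose hbig
      simp only [Nat.add_sub_cancel] at hchoose
      have hm1 : 1 ≤ m := by omega
      nlinarith [hchoose, Nat.mul_le_mul hbig hbig, hm1]
end Aux14F

set_option maxHeartbeats 1000000 in
/-- Given, for every undirected component `c` of a connected, dismembered mixed graph
`(G, w)` whose undirected edges form a forest and with `k = |A| ≥ 1`, an
`(ε/(392 k³))`-optimal replacement set `𝒯 c`, there is a `(1 − ε)`-optimal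
orientation of `G` whose inherited orientation on each `c` belongs to `𝒯 c`. -/
theorem stmt14 {V : Type*} [Fintype V] [DecidableEq V] (ε : ℝ) (hε : 0 < ε)
    (G : MixedGraph V) (hconn : G.UG.Connected) (hforest : G.edgeGraph.IsAcyclic)
    (hdis : G.Dismembered) (hk : 1 ≤ G.arcs.card) (w : V → ℕ)
    (𝒯 : ∀ _ : G.edgeGraph.ConnectedComponent, Set (V → V → Prop))
    (h𝒯 : ∀ c, IsApproxReplacementSet G w c
      (ε / (392 * (G.arcs.card : ℝ) ^ 3)) (𝒯 c)) :
    ∃ o, OrientsEdges (G.edges : Set (Sym2 V)) o ∧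
      (∀ o', OrientsEdges (G.edges : Set (Sym2 V)) o' →
        (1 - ε) * (Rw (G.dig o') w : ℝ) ≤ (Rw (G.dig o) w : ℝ)) ∧
      ∀ c : G.edgeGraph.ConnectedComponent, inheritO G c o ∈ 𝒯 c := by
  classical
  set S : ℕ := ∑ v, w v with hSdef
  set k : ℕ := G.arcs.card with hkdef
  set δ : ℝ := ε / (392 * (k : ℝ) ^ 3) with hδdef
  set q : ℕ := Fintype.card G.edgeGraph.ConnectedComponent with hqdef
  -- Part 3: a globally good orientation
  obtain ⟨o₀, ho₀, hlow⟩ := exists_good_orientation G w (fun c => tree_lemma G hforest w c)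
  -- Part 1: a maximal orientation
  obtain ⟨om, hom, hmax⟩ := exists_max_orientation G w
  set M : ℕ := Rw (G.dig om) w with hMdef
  have hlow' : ∑ c, (Wc G c w) ^ 2 ≤ 32 * M + S := by
    refine hlow.trans ?_
    have := hmax o₀ ho₀
    omega
  -- chain of replacements starting from om
  set L := (Finset.univ : Finset G.edgeGraph.ConnectedComponent).toList with hLdef
  obtain ⟨of, hof, hRf, hmem, -⟩ :=
    chain_replace G w δ 𝒯 h𝒯 L (Finset.nodup_toList _) om hom
  have hLlen : L.length = q := by
    rw [hLdef, Finset.length_toList, Finset.card_univ]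
  have hcastS : (∑ v, (w v : ℝ)) = (S : ℝ) := by push_cast [hSdef]; ring
  rw [hLlen, hcastS] at hRf
  refine ⟨of, hof, ?_, fun c => hmem c (Finset.mem_toList.mpr (Finset.mem_univ c))⟩
  intro o' ho'
  have hub : (Rw (G.dig o') w : ℝ) ≤ (M : ℝ) := by exact_mod_cast hmax o' ho'
  have hRfnn : (0 : ℝ) ≤ (Rw (G.dig of) w : ℝ) := Nat.cast_nonneg _
  by_cases hε1 : 1 ≤ ε
  · have h1 : (1 - ε) ≤ 0 := by linarith
    have := mul_nonpos_of_nonpos_of_nonneg h1 (Nat.cast_nonneg (Rw (G.dig o') w))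
    linarith
  push_neg at hε1
  by_cases hM0 : M = 0
  · have h0 : Rw (G.dig o') w = 0 := by
      have := hmax o' ho'
      omega
    rw [h0]
    push_cast
    linarith
  -- main case: q * S² ≤ 392 k³ M  (in ℕ)
  have hM1 : 1 ≤ M := Nat.one_le_iff_ne_zero.mpr hM0
  have hq2k : q ≤ 2 * k := card_CC_le G hconn hk
  have hkey : q * S ^ 2 ≤ 392 * k ^ 3 * M := by
    have hMk : 392 * k ^ 3 * 1 ≤ 392 * k ^ 3 * M := Nat.mul_le_mul_left _ hM1
    by_cases hSq : S < 2 * q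
    · have t1 : S ^ 2 ≤ (2 * q) ^ 2 := Nat.pow_le_pow_left (le_of_lt hSq) 2
      have t2 : q * S ^ 2 ≤ q * (2 * q) ^ 2 := Nat.mul_le_mul_left q t1
      have t3 : q ^ 3 ≤ (2 * k) ^ 3 := Nat.pow_le_pow_left hq2k 3
      have t4 : q * (2 * q) ^ 2 = 4 * q ^ 3 := by ring
      nlinarith [t2, t3, hM1, Nat.zero_le (k ^ 3), Nat.zero_le (k ^ 3 * M)]
    · push_neg at hSq
      have hcheb : S ^ 2 ≤ q * ∑ c, (Wc G c w) ^ 2 := by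
        have hr : ((S : ℝ)) ^ 2 ≤ (q : ℝ) * ∑ c, ((Wc G c w : ℝ)) ^ 2 := by
          have h1 : (S : ℝ) = ∑ c, ((Wc G c w : ℝ)) := by
            rw [hSdef]
            push_cast [← sum_Wc G w]
            ring
          rw [h1]
          have := sq_sum_le_card_mul_sum_sq
            (s := (Finset.univ : Finset G.edgeGraph.ConnectedComponent))
            (f := fun c => ((Wc G c w : ℝ)))
          simpa [hqdef, Finset.card_univ] using this
        exact_mod_cast hr
      have e1 : S ^ 2 ≤ 32 * (q * M) + q * S := by
        calc S ^ 2 ≤ q * (32 * M + S) := hcheb.trans (Nat.mul_le_mul_left q hlow')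
          _ = 32 * (q * M) + q * S := by ring
      have e2 : 2 * (q * S) ≤ S ^ 2 := by
        have h := Nat.mul_le_mul_right S hSq
        have h2 : S * S = S ^ 2 := by ring
        linarith [h, h2]
      have hS2 : S ^ 2 ≤ 64 * (q * M) := by linarith
      have t1 : q * S ^ 2 ≤ q * (64 * (q * M)) := Nat.mul_le_mul_left q hS2
      have t2 : q * (64 * (q * M)) = 64 * q ^ 2 * M := by ring
      have t3 : q ^ 2 ≤ 4 * k ^ 2 := by nlinarith [Nat.mul_le_mul hq2k hq2k]
      have t4 : 64 * q ^ 2 * M ≤ 256 * k ^ 2 * M := by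
        have h1 : 64 * q ^ 2 ≤ 256 * k ^ 2 := by linarith
        exact Nat.mul_le_mul_right M h1
      have t5 : 256 * k ^ 2 * M ≤ 392 * k ^ 3 * M := by
        have hkk : k ^ 2 ≤ k ^ 3 := Nat.pow_le_pow_right hk (by omega)
        have h1 : k ^ 2 * M ≤ k ^ 3 * M := Nat.mul_le_mul_right M hkk
        calc 256 * k ^ 2 * M = 256 * (k ^ 2 * M) := by ring
          _ ≤ 392 * (k ^ 3 * M) := Nat.mul_le_mul (by norm_num) h1
          _ = 392 * k ^ 3 * M := by ring
      linarith [t1, t2, t4, t5]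
  -- transfer to ℝ
  have hD : (0 : ℝ) < 392 * (k : ℝ) ^ 3 := by
    have : (1 : ℝ) ≤ (k : ℝ) := by exact_mod_cast hk
    positivity
  have hkeyR : (q : ℝ) * (S : ℝ) ^ 2 ≤ 392 * (k : ℝ) ^ 3 * (M : ℝ) := by
    exact_mod_cast hkey
  have hδS : (q : ℝ) * (δ * (S : ℝ) ^ 2) ≤ ε * M := by
    have h1 : (q : ℝ) * (δ * (S : ℝ) ^ 2)
        = ε * ((q : ℝ) * (S : ℝ) ^ 2) / (392 * (k : ℝ) ^ 3) := by
      rw [hδdef]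
      field_simp
    rw [h1, div_le_iff₀ hD]
    calc ε * ((q : ℝ) * (S : ℝ) ^ 2) ≤ ε * (392 * (k : ℝ) ^ 3 * (M : ℝ)) :=
          mul_le_mul_of_nonneg_left hkeyR (le_of_lt hε)
      _ = ε * M * (392 * (k : ℝ) ^ 3) := by ring
  have hstep : (1 - ε) * (Rw (G.dig o') w : ℝ) ≤ (1 - ε) * (M : ℝ) :=
    mul_le_mul_of_nonneg_left hub (by linarith)
  linarith [hRf, hδS, hstep]
end

section
/- For every positive integer q there exist a mixed graph G = (V, E, A) on a finite vertex set with exactly 2 arcs (|A| = 2) that is dismembered, a weight function w : V → ℕ, and an undirected component T of G such that every optimal replacement set for ((G,w),T) has cardinality at least q + 1. -/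
open Finset

variable {V : Type*}

-- ===================== Construction for stmt15 =====================
namespace Stmt15

variable (q : ℕ)

abbrev Vq := Fin (q+1) ⊕ (Fin (2*q) ⊕ Fin 3)

def uu (i : Fin (q+1)) : Vq q := Sum.inl i
def xx (j : Fin (2*q)) : Vq q := Sum.inr (Sum.inl j)
def zz : Vq q := Sum.inr (Sum.inr 0)
def ss : Vq q := Sum.inr (Sum.inr 1)
def tt : Vq q := Sum.inr (Sum.inr 2)

def Gq : MixedGraph (Vq q) where
  edges := (Finset.univ.image fun i : Fin (q+1) => s(uu q i, zz q)) ∪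
    (Finset.univ.image fun j : Fin (2*q) => s(xx q j, ss q))
  arcs := {(ss q, zz q), (zz q, tt q)}
  edges_not_diag := by
    intro e he
    simp only [mem_union, mem_image, mem_univ, true_and] at he
    rcases he with ⟨i, rfl⟩ | ⟨j, rfl⟩ <;> simp [uu, zz, xx, ss]
  arcs_ne := by
    intro a ha
    simp only [mem_insert, mem_singleton] at ha
    rcases ha with rfl | rfl <;> simp [ss, zz, tt]

def wq : Vq q → ℕ
  | Sum.inl _ => 1
  | Sum.inr (Sum.inl _) => 1
  | Sum.inr (Sum.inr k) => if k = 0 then 0 else if k = 1 then 1 else q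

lemma mem_edges {e : Sym2 (Vq q)} :
    e ∈ (Gq q).edges ↔ (∃ i, e = s(uu q i, zz q)) ∨ ∃ j, e = s(xx q j, ss q) := by
  simp [Gq, eq_comm]

lemma mem_arcs {a : Vq q × Vq q} :
    a ∈ (Gq q).arcs ↔ a = (ss q, zz q) ∨ a = (zz q, tt q) := by
  simp [Gq]

variable {q} {o : Vq q → Vq q → Prop}

lemma o_shape (ho : OrientsEdges ((Gq q).edges : Set (Sym2 (Vq q))) o) {v w : Vq q}
    (h : o v w) :
    (∃ i, v = uu q i ∧ w = zz q) ∨ (∃ i, v = zz q ∧ w = uu q i) ∨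
    (∃ j, v = xx q j ∧ w = ss q) ∨ (∃ j, v = ss q ∧ w = xx q j) := by
  have := ho.1 v w h
  rw [Finset.mem_coe, mem_edges] at this
  rcases this with ⟨i, hi⟩ | ⟨j, hj⟩
  · rw [Sym2.eq_iff] at hi
    rcases hi with ⟨rfl, rfl⟩ | ⟨rfl, rfl⟩
    · exact Or.inl ⟨i, rfl, rfl⟩
    · exact Or.inr (Or.inl ⟨i, rfl, rfl⟩)
  · rw [Sym2.eq_iff] at hj
    rcases hj with ⟨rfl, rfl⟩ | ⟨rfl, rfl⟩
    · exact Or.inr (Or.inr (Or.inl ⟨j, rfl, rfl⟩))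
    · exact Or.inr (Or.inr (Or.inr ⟨j, rfl, rfl⟩))

lemma o_uz_iff (ho : OrientsEdges ((Gq q).edges : Set (Sym2 (Vq q))) o) (i : Fin (q+1)) :
    o (uu q i) (zz q) ↔ ¬ o (zz q) (uu q i) :=
  ho.2 _ _ (by rw [Finset.mem_coe, mem_edges]; exact Or.inl ⟨i, rfl⟩)

lemma o_xs_iff (ho : OrientsEdges ((Gq q).edges : Set (Sym2 (Vq q))) o) (j : Fin (2*q)) :
    o (xx q j) (ss q) ↔ ¬ o (ss q) (xx q j) :=
  ho.2 _ _ (by rw [Finset.mem_coe, mem_edges]; exact Or.inr ⟨j, rfl⟩)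

lemma dig_step (ho : OrientsEdges ((Gq q).edges : Set (Sym2 (Vq q))) o) {v w : Vq q}
    (h : (Gq q).dig o v w) :
    (v = ss q ∧ w = zz q) ∨ (v = zz q ∧ w = tt q) ∨
    (∃ i, v = uu q i ∧ w = zz q ∧ o v w) ∨ (∃ i, v = zz q ∧ w = uu q i ∧ o v w) ∨
    (∃ j, v = xx q j ∧ w = ss q ∧ o v w) ∨ (∃ j, v = ss q ∧ w = xx q j ∧ o v w) := by
  rcases h with h | h
  · rw [mem_arcs] at h
    rcases h with h | h
    · exact Or.inl ⟨congrArg Prod.fst h, congrArg Prod.snd h⟩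
    · exact Or.inr (Or.inl ⟨congrArg Prod.fst h, congrArg Prod.snd h⟩)
  · rcases o_shape ho h with ⟨i, rfl, rfl⟩ | ⟨i, rfl, rfl⟩ | ⟨j, rfl, rfl⟩ | ⟨j, rfl, rfl⟩
    · exact Or.inr (Or.inr (Or.inl ⟨i, rfl, rfl, h⟩))
    · exact Or.inr (Or.inr (Or.inr (Or.inl ⟨i, rfl, rfl, h⟩)))
    · exact Or.inr (Or.inr (Or.inr (Or.inr (Or.inl ⟨j, rfl, rfl, h⟩))))
    · exact Or.inr (Or.inr (Or.inr (Or.inr (Or.inr ⟨j, rfl, rfl, h⟩))))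

-- disequality simp lemmas
section
variable {q : ℕ} {i i' : Fin (q+1)} {j j' : Fin (2*q)}
@[simp] lemma uu_inj : uu q i = uu q i' ↔ i = i' := by simp [uu]
@[simp] lemma xx_inj : xx q j = xx q j' ↔ j = j' := by simp [xx]
@[simp] lemma uu_ne_xx : uu q i ≠ xx q j := by simp [uu, xx]
@[simp] lemma xx_ne_uu : xx q j ≠ uu q i := by simp [uu, xx]
@[simp] lemma uu_ne_zz : uu q i ≠ zz q := by simp [uu, zz]
@[simp] lemma zz_ne_uu : zz q ≠ uu q i := by simp [uu, zz]
@[simp] lemma uu_ne_ss : uu q i ≠ ss q := by simp [uu, ss]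
@[simp] lemma ss_ne_uu : ss q ≠ uu q i := by simp [uu, ss]
@[simp] lemma uu_ne_tt : uu q i ≠ tt q := by simp [uu, tt]
@[simp] lemma tt_ne_uu : tt q ≠ uu q i := by simp [uu, tt]
@[simp] lemma xx_ne_zz : xx q j ≠ zz q := by simp [xx, zz]
@[simp] lemma zz_ne_xx : zz q ≠ xx q j := by simp [xx, zz]
@[simp] lemma xx_ne_ss : xx q j ≠ ss q := by simp [xx, ss]
@[simp] lemma ss_ne_xx : ss q ≠ xx q j := by simp [xx, ss]
@[simp] lemma xx_ne_tt : xx q j ≠ tt q := by simp [xx, tt]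
@[simp] lemma tt_ne_xx : tt q ≠ xx q j := by simp [xx, tt]
@[simp] lemma zz_ne_ss : zz q ≠ ss q := by simp [zz, ss]
@[simp] lemma ss_ne_zz : ss q ≠ zz q := by simp [zz, ss]
@[simp] lemma zz_ne_tt : zz q ≠ tt q := by simp [zz, tt]
@[simp] lemma tt_ne_zz : tt q ≠ zz q := by simp [zz, tt]
@[simp] lemma ss_ne_tt : ss q ≠ tt q := by simp [ss, tt]
@[simp] lemma tt_ne_ss : tt q ≠ ss q := by simp [ss, tt]
end

section reach
variable (ho : OrientsEdges ((Gq q).edges : Set (Sym2 (Vq q))) o)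
include ho

lemma reach_from_t {w : Vq q} (h : Relation.ReflTransGen ((Gq q).dig o) (tt q) w) :
    w = tt q := by
  induction h with
  | refl => rfl
  | tail hb hst ih =>
    subst ih
    rcases dig_step ho hst with ⟨h1, h2⟩ | ⟨h1, h2⟩ | ⟨i, h1, h2, h3⟩ | ⟨i, h1, h2, h3⟩ |
      ⟨j, h1, h2, h3⟩ | ⟨j, h1, h2, h3⟩ <;> simp_all

lemma reach_from_z {w : Vq q} (h : Relation.ReflTransGen ((Gq q).dig o) (zz q) w) :
    w = zz q ∨ w = tt q ∨ ∃ i, w = uu q i ∧ o (zz q) (uu q i) := by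
  induction h with
  | refl => exact Or.inl rfl
  | tail hb hst ih =>
    rcases ih with rfl | rfl | ⟨i, rfl, hoi⟩
    · rcases dig_step ho hst with ⟨h1, h2⟩ | ⟨h1, h2⟩ | ⟨i, h1, h2, h3⟩ | ⟨i, h1, h2, h3⟩ |
        ⟨j, h1, h2, h3⟩ | ⟨j, h1, h2, h3⟩ <;> simp_all
    · rcases dig_step ho hst with ⟨h1, h2⟩ | ⟨h1, h2⟩ | ⟨i, h1, h2, h3⟩ | ⟨i, h1, h2, h3⟩ |
        ⟨j, h1, h2, h3⟩ | ⟨j, h1, h2, h3⟩ <;> simp_all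
    · rcases dig_step ho hst with ⟨h1, h2⟩ | ⟨h1, h2⟩ | ⟨i', h1, h2, h3⟩ | ⟨i', h1, h2, h3⟩ |
        ⟨j, h1, h2, h3⟩ | ⟨j, h1, h2, h3⟩ <;> simp_all

lemma reach_from_s {w : Vq q} (h : Relation.ReflTransGen ((Gq q).dig o) (ss q) w) :
    w = ss q ∨ w = zz q ∨ w = tt q ∨ (∃ i, w = uu q i ∧ o (zz q) (uu q i)) ∨
      (∃ j, w = xx q j ∧ o (ss q) (xx q j)) := by
  induction h with
  | refl => exact Or.inl rfl
  | tail hb hst ih =>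
    rcases ih with rfl | rfl | rfl | ⟨i, rfl, hoi⟩ | ⟨j, rfl, hoj⟩
    · rcases dig_step ho hst with ⟨h1, h2⟩ | ⟨h1, h2⟩ | ⟨i, h1, h2, h3⟩ | ⟨i, h1, h2, h3⟩ |
        ⟨j, h1, h2, h3⟩ | ⟨j, h1, h2, h3⟩ <;> simp_all
    · rcases dig_step ho hst with ⟨h1, h2⟩ | ⟨h1, h2⟩ | ⟨i, h1, h2, h3⟩ | ⟨i, h1, h2, h3⟩ |
        ⟨j, h1, h2, h3⟩ | ⟨j, h1, h2, h3⟩ <;> simp_all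
    · rcases dig_step ho hst with ⟨h1, h2⟩ | ⟨h1, h2⟩ | ⟨i, h1, h2, h3⟩ | ⟨i, h1, h2, h3⟩ |
        ⟨j, h1, h2, h3⟩ | ⟨j, h1, h2, h3⟩ <;> simp_all
    · rcases dig_step ho hst with ⟨h1, h2⟩ | ⟨h1, h2⟩ | ⟨i', h1, h2, h3⟩ | ⟨i', h1, h2, h3⟩ |
        ⟨j, h1, h2, h3⟩ | ⟨j, h1, h2, h3⟩ <;> simp_all
    · rcases dig_step ho hst with ⟨h1, h2⟩ | ⟨h1, h2⟩ | ⟨i, h1, h2, h3⟩ | ⟨i, h1, h2, h3⟩ |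
        ⟨j', h1, h2, h3⟩ | ⟨j', h1, h2, h3⟩ <;> simp_all

lemma reach_from_u {w : Vq q} (i : Fin (q+1))
    (h : Relation.ReflTransGen ((Gq q).dig o) (uu q i) w) :
    w = uu q i ∨ (o (uu q i) (zz q) ∧ (w = zz q ∨ w = tt q ∨
      ∃ i', w = uu q i' ∧ o (zz q) (uu q i'))) := by
  induction h with
  | refl => exact Or.inl rfl
  | tail hb hst ih =>
    rcases ih with rfl | ⟨hz, rfl | rfl | ⟨i', rfl, hoi⟩⟩ <;>
      rcases dig_step ho hst with ⟨h1, h2⟩ | ⟨h1, h2⟩ | ⟨i'', h1, h2, h3⟩ |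
        ⟨i'', h1, h2, h3⟩ | ⟨j, h1, h2, h3⟩ | ⟨j, h1, h2, h3⟩ <;> simp_all

lemma reach_from_x {w : Vq q} (j : Fin (2*q))
    (h : Relation.ReflTransGen ((Gq q).dig o) (xx q j) w) :
    w = xx q j ∨ (o (xx q j) (ss q) ∧ (w = ss q ∨ w = zz q ∨ w = tt q ∨
      (∃ i, w = uu q i ∧ o (zz q) (uu q i)) ∨
      (∃ j', w = xx q j' ∧ o (ss q) (xx q j')))) := by
  induction h with
  | refl => exact Or.inl rfl
  | tail hb hst ih =>
    rcases ih with rfl | ⟨hs, rfl | rfl | rfl | ⟨i, rfl, hoi⟩ | ⟨j', rfl, hoj⟩⟩ <;>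
      rcases dig_step ho hst with ⟨h1, h2⟩ | ⟨h1, h2⟩ | ⟨i'', h1, h2, h3⟩ |
        ⟨i'', h1, h2, h3⟩ | ⟨j'', h1, h2, h3⟩ | ⟨j'', h1, h2, h3⟩ <;> simp_all

end reach

lemma dig_sz : (Gq q).dig o (ss q) (zz q) := Or.inl (by rw [mem_arcs]; left; rfl)
lemma dig_zt : (Gq q).dig o (zz q) (tt q) := Or.inl (by rw [mem_arcs]; right; rfl)

section rtg
variable (ho : OrientsEdges ((Gq q).edges : Set (Sym2 (Vq q))) o)
include ho

open Relation in
lemma rtg_u_u {i i' : Fin (q+1)} (hne : i ≠ i') :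
    Relation.ReflTransGen ((Gq q).dig o) (uu q i) (uu q i') ↔
      o (uu q i) (zz q) ∧ o (zz q) (uu q i') := by
  constructor
  · intro h
    rcases reach_from_u ho i h with h | ⟨h1, h | h | ⟨i'', h2, h3⟩⟩ <;> simp_all
  · rintro ⟨h1, h2⟩
    exact ReflTransGen.head (Or.inr h1) (ReflTransGen.single (Or.inr h2))

open Relation in
lemma rtg_u_s {i : Fin (q+1)} :
    ¬ Relation.ReflTransGen ((Gq q).dig o) (uu q i) (ss q) := by
  intro h
  rcases reach_from_u ho i h with h | ⟨h1, h | h | ⟨i'', h2, h3⟩⟩ <;> simp_all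

open Relation in
lemma rtg_u_x {i : Fin (q+1)} {j : Fin (2*q)} :
    ¬ Relation.ReflTransGen ((Gq q).dig o) (uu q i) (xx q j) := by
  intro h
  rcases reach_from_u ho i h with h | ⟨h1, h | h | ⟨i'', h2, h3⟩⟩ <;> simp_all

open Relation in
lemma rtg_u_t {i : Fin (q+1)} :
    Relation.ReflTransGen ((Gq q).dig o) (uu q i) (tt q) ↔ o (uu q i) (zz q) := by
  constructor
  · intro h
    rcases reach_from_u ho i h with h | ⟨h1, h | h | ⟨i'', h2, h3⟩⟩ <;> simp_all
  · intro h1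
    exact Relation.ReflTransGen.head (Or.inr h1) (Relation.ReflTransGen.single dig_zt)

open Relation in
lemma rtg_x_s {j : Fin (2*q)} :
    Relation.ReflTransGen ((Gq q).dig o) (xx q j) (ss q) ↔ o (xx q j) (ss q) := by
  constructor
  · intro h
    rcases reach_from_x ho j h with h | ⟨h1, h⟩ <;> simp_all
  · intro h1
    exact Relation.ReflTransGen.single (Or.inr h1)

open Relation in
lemma rtg_x_t {j : Fin (2*q)} :
    Relation.ReflTransGen ((Gq q).dig o) (xx q j) (tt q) ↔ o (xx q j) (ss q) := by
  constructor
  · intro h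
    rcases reach_from_x ho j h with h | ⟨h1, h⟩ <;> simp_all
  · intro h1
    exact Relation.ReflTransGen.head (Or.inr h1)
      (Relation.ReflTransGen.head dig_sz (Relation.ReflTransGen.single dig_zt))

open Relation in
lemma rtg_x_u {j : Fin (2*q)} {i : Fin (q+1)} :
    Relation.ReflTransGen ((Gq q).dig o) (xx q j) (uu q i) ↔
      o (xx q j) (ss q) ∧ o (zz q) (uu q i) := by
  constructor
  · intro h
    rcases reach_from_x ho j h with h | ⟨h1, h | h | h | ⟨i', h2, h3⟩ | ⟨j', h2, h3⟩⟩ <;>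
      simp_all
  · rintro ⟨h1, h2⟩
    exact Relation.ReflTransGen.head (Or.inr h1)
      (Relation.ReflTransGen.head dig_sz (Relation.ReflTransGen.single (Or.inr h2)))

open Relation in
lemma rtg_x_x {j j' : Fin (2*q)} (hne : j ≠ j') :
    Relation.ReflTransGen ((Gq q).dig o) (xx q j) (xx q j') ↔
      o (xx q j) (ss q) ∧ o (ss q) (xx q j') := by
  constructor
  · intro h
    rcases reach_from_x ho j h with h | ⟨h1, h | h | h | ⟨i', h2, h3⟩ | ⟨j'', h2, h3⟩⟩ <;>
      simp_all
  · rintro ⟨h1, h2⟩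
    exact Relation.ReflTransGen.head (Or.inr h1) (Relation.ReflTransGen.single (Or.inr h2))

open Relation in
lemma rtg_s_u {i : Fin (q+1)} :
    Relation.ReflTransGen ((Gq q).dig o) (ss q) (uu q i) ↔ o (zz q) (uu q i) := by
  constructor
  · intro h
    rcases reach_from_s ho h with h | h | h | ⟨i', h2, h3⟩ | ⟨j', h2, h3⟩ <;> simp_all
  · intro h1
    exact Relation.ReflTransGen.head dig_sz (Relation.ReflTransGen.single (Or.inr h1))

open Relation in
lemma rtg_s_x {j : Fin (2*q)} :
    Relation.ReflTransGen ((Gq q).dig o) (ss q) (xx q j) ↔ o (ss q) (xx q j) := by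
  constructor
  · intro h
    rcases reach_from_s ho h with h | h | h | ⟨i', h2, h3⟩ | ⟨j', h2, h3⟩ <;> simp_all
  · intro h1
    exact Relation.ReflTransGen.single (Or.inr h1)

open Relation in
lemma rtg_s_t :
    Relation.ReflTransGen ((Gq q).dig o) (ss q) (tt q) := by
  exact Relation.ReflTransGen.head dig_sz (Relation.ReflTransGen.single dig_zt)

open Relation in
lemma rtg_t_not {w : Vq q} (hne : w ≠ tt q) :
    ¬ Relation.ReflTransGen ((Gq q).dig o) (tt q) w := fun h => hne (reach_from_t ho h)

end rtg

lemma kappa_self {V : Type*} (A : V → V → Prop) (v : V) : kappa A v v = 1 := by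
  rw [kappa, if_pos Relation.ReflTransGen.refl]

open Classical in
lemma kappa_congr {V : Type*} {A : V → V → Prop} {u v : V} {P : Prop}
    (h : Relation.ReflTransGen A u v ↔ P) :
    kappa A u v = if P then 1 else 0 := by
  rw [kappa]
  by_cases hP : P
  · rw [if_pos (h.mpr hP), if_pos hP]
  · rw [if_neg (fun hr => hP (h.mp hr)), if_neg hP]

lemma kappa_zero {V : Type*} {A : V → V → Prop} {u v : V}
    (h : ¬ Relation.ReflTransGen A u v) : kappa A u v = 0 := by
  rw [kappa, if_neg h]

lemma card_filter_fin_lt {n c : ℕ} (h : c ≤ n) :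
    #(Finset.univ.filter fun j : Fin n => (j : ℕ) < c) = c := by
  rcases eq_or_lt_of_le h with rfl | h
  · rw [Finset.filter_true_of_mem (fun j _ => j.isLt)]
    simp
  · have : (Finset.univ.filter fun j : Fin n => (j : ℕ) < c) = Finset.Iio ⟨c, h⟩ := by
      ext j
      simp [Fin.lt_def]
    rw [this, Fin.card_Iio]

open Classical in
noncomputable def acard (o : Vq q → Vq q → Prop) : ℕ :=
  #(Finset.univ.filter fun j : Fin (2*q) => o (xx q j) (ss q))

open Classical in
noncomputable def mcard (o : Vq q → Vq q → Prop) : ℕ :=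
  #(Finset.univ.filter fun i : Fin (q+1) => o (uu q i) (zz q))

lemma mcard_le : mcard o ≤ q + 1 := by
  classical
  exact le_trans (Finset.card_filter_le _ _) (by simp)

lemma acard_le : acard o ≤ 2 * q := by
  classical
  exact le_trans (Finset.card_filter_le _ _) (by simp)

section cnt
variable (ho : OrientsEdges ((Gq q).edges : Set (Sym2 (Vq q))) o)
include ho

open Classical in
lemma out_u_card : #(Finset.univ.filter fun i : Fin (q+1) => o (zz q) (uu q i))
    = (q + 1) - mcard o := by
  classical
  have h1 : (Finset.univ.filter fun i : Fin (q+1) => o (zz q) (uu q i))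
      = Finset.univ.filter fun i : Fin (q+1) => ¬ o (uu q i) (zz q) := by
    apply Finset.filter_congr
    intro i _
    rw [o_uz_iff ho i]
    tauto
  have h2 := Finset.card_filter_add_card_filter_not
    (s := (Finset.univ : Finset (Fin (q+1)))) (p := fun i => o (uu q i) (zz q))
  rw [h1]
  simp only [Finset.card_univ, Fintype.card_fin] at h2
  rw [mcard]
  omega

open Classical in
lemma out_x_card : #(Finset.univ.filter fun j : Fin (2*q) => o (ss q) (xx q j))
    = 2 * q - acard o := by
  classical
  have h1 : (Finset.univ.filter fun j : Fin (2*q) => o (ss q) (xx q j))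
      = Finset.univ.filter fun j : Fin (2*q) => ¬ o (xx q j) (ss q) := by
    apply Finset.filter_congr
    intro j _
    rw [o_xs_iff ho j]
    tauto
  have h2 := Finset.card_filter_add_card_filter_not
    (s := (Finset.univ : Finset (Fin (2*q)))) (p := fun j => o (xx q j) (ss q))
  rw [h1]
  simp only [Finset.card_univ, Fintype.card_fin] at h2
  rw [acard]
  omega

end cnt

def Phi (q a m : ℕ) : ℕ :=
  2 * Nat.choose q 2 + (m * (q + 1 - m) + q * m + a * (q + 1 - m) + a * (2 * q - a)
    + a + q * a + (q + 1 - m) + (2 * q - a) + q)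

lemma fold_uu {q : ℕ} (i : Fin (q+1)) : (Sum.inl i : Vq q) = uu q i := rfl
lemma fold_xx {q : ℕ} (j : Fin (2*q)) : (Sum.inr (Sum.inl j) : Vq q) = xx q j := rfl
lemma fold_zz {q : ℕ} : (Sum.inr (Sum.inr 0) : Vq q) = zz q := rfl
lemma fold_ss {q : ℕ} : (Sum.inr (Sum.inr 1) : Vq q) = ss q := rfl
lemma fold_tt {q : ℕ} : (Sum.inr (Sum.inr 2) : Vq q) = tt q := rfl

lemma sum_ite_const {α : Type*} (s : Finset α) (P : α → Prop) [DecidablePred P] (C : ℕ) :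
    ∑ i ∈ s, (if P i then C else 0) = C * #(s.filter P) := by
  calc ∑ i ∈ s, (if P i then C else 0) = ∑ i ∈ s, C * (if P i then 1 else 0) :=
        Finset.sum_congr rfl (fun i _ => by split <;> simp)
    _ = C * ∑ i ∈ s, (if P i then 1 else 0) := (Finset.mul_sum _ _ _).symm
    _ = C * #(s.filter P) := by rw [Finset.sum_boole]; simp

open Classical in
lemma Rw_eq (ho : OrientsEdges ((Gq q).edges : Set (Sym2 (Vq q))) o) :
    Rw ((Gq q).dig o) (wq q) = Phi q (acard o) (mcard o) := by
  classical
  have wu : ∀ i : Fin (q+1), wq q (uu q i) = 1 := fun i => rfl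
  have wx : ∀ j : Fin (2*q), wq q (xx q j) = 1 := fun j => rfl
  have wz : wq q (zz q) = 0 := rfl
  have ws : wq q (ss q) = 1 := rfl
  have wt : wq q (tt q) = q := rfl
  set K := kappa ((Gq q).dig o) with hKdef
  set m := mcard o with hm
  set a := acard o with ha
  have hmfilter : #(Finset.univ.filter fun i : Fin (q+1) => o (uu q i) (zz q)) = m := by
    rw [hm, mcard]
  have hafilter : #(Finset.univ.filter fun j : Fin (2*q) => o (xx q j) (ss q)) = a := by
    rw [ha, acard]
  -- inner sums
  have hu : ∀ i : Fin (q+1), (∑ v : Vq q, wq q (uu q i) * wq q v * K (uu q i) v)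
      = 1 + (if o (uu q i) (zz q) then ((q+1) - m) + q else 0) := by
    intro i
    rw [Fintype.sum_sum_type, Fintype.sum_sum_type, Fin.sum_univ_three]
    simp only [fold_uu, fold_xx, fold_zz, fold_ss, fold_tt]
    have e1 : ∑ i' : Fin (q+1), wq q (uu q i) * wq q (uu q i') * K (uu q i) (uu q i')
        = 1 + (if o (uu q i) (zz q) then (q+1) - m else 0) := by
      have e11 : ∀ i' : Fin (q+1), wq q (uu q i) * wq q (uu q i') * K (uu q i) (uu q i')
          = (if i = i' then 1 else 0)
            + (if o (uu q i) (zz q) then (if o (zz q) (uu q i') then 1 else 0) else 0) := by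
        intro i'
        rw [wu, wu, one_mul, one_mul]
        by_cases hii : i = i'
        · subst hii
          rw [hKdef, kappa_self]
          by_cases h1 : o (uu q i) (zz q)
          · have h2 : ¬ o (zz q) (uu q i) := (o_uz_iff ho i).mp h1
            simp [h1, h2]
          · simp [h1]
        · rw [hKdef, kappa_congr (rtg_u_u ho hii)]
          by_cases h1 : o (uu q i) (zz q) <;> by_cases h2 : o (zz q) (uu q i') <;>
            simp [h1, h2, hii]
      rw [Finset.sum_congr rfl (fun i' _ => e11 i'), Finset.sum_add_distrib]
      congr 1
      · simp
      · by_cases h1 : o (uu q i) (zz q)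
        · simp only [h1, if_true]
          rw [Finset.sum_boole]
          simp [out_u_card ho, hm]
        · simp [h1]
    have e2 : ∑ j' : Fin (2*q), wq q (uu q i) * wq q (xx q j') * K (uu q i) (xx q j') = 0 :=
      Finset.sum_eq_zero fun j' _ => by rw [hKdef, kappa_zero (rtg_u_x ho), mul_zero]
    rw [e1, e2, wz, hKdef, kappa_zero (rtg_u_s ho), kappa_congr (rtg_u_t ho), wt, wu, ws]
    by_cases h1 : o (uu q i) (zz q) <;> simp [h1] <;> ring
  have hx : ∀ j : Fin (2*q), (∑ v : Vq q, wq q (xx q j) * wq q v * K (xx q j) v)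
      = 1 + (if o (xx q j) (ss q) then ((q+1) - m) + ((2*q) - a) + 1 + q else 0) := by
    intro j
    rw [Fintype.sum_sum_type, Fintype.sum_sum_type, Fin.sum_univ_three]
    simp only [fold_uu, fold_xx, fold_zz, fold_ss, fold_tt]
    have e1 : ∑ i : Fin (q+1), wq q (xx q j) * wq q (uu q i) * K (xx q j) (uu q i)
        = (if o (xx q j) (ss q) then (q+1) - m else 0) := by
      have e11 : ∀ i : Fin (q+1), wq q (xx q j) * wq q (uu q i) * K (xx q j) (uu q i)
          = (if o (xx q j) (ss q) then (if o (zz q) (uu q i) then 1 else 0) else 0) := by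
        intro i
        rw [wu, wx, one_mul, one_mul, hKdef, kappa_congr (rtg_x_u ho)]
        by_cases h1 : o (xx q j) (ss q) <;> by_cases h2 : o (zz q) (uu q i) <;>
          simp [h1, h2]
      rw [Finset.sum_congr rfl (fun i _ => e11 i)]
      by_cases h1 : o (xx q j) (ss q)
      · simp only [h1, if_true]
        rw [Finset.sum_boole]
        simp [out_u_card ho, hm]
      · simp [h1]
    have e2 : ∑ j' : Fin (2*q), wq q (xx q j) * wq q (xx q j') * K (xx q j) (xx q j')
        = 1 + (if o (xx q j) (ss q) then (2*q) - a else 0) := by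
      have e22 : ∀ j' : Fin (2*q), wq q (xx q j) * wq q (xx q j') * K (xx q j) (xx q j')
          = (if j = j' then 1 else 0)
            + (if o (xx q j) (ss q) then (if o (ss q) (xx q j') then 1 else 0) else 0) := by
        intro j'
        rw [wx, wx, one_mul, one_mul]
        by_cases hjj : j = j'
        · subst hjj
          rw [hKdef, kappa_self]
          by_cases h1 : o (xx q j) (ss q)
          · have h2 : ¬ o (ss q) (xx q j) := (o_xs_iff ho j).mp h1
            simp [h1, h2]
          · simp [h1]
        · rw [hKdef, kappa_congr (rtg_x_x ho hjj)]
          by_cases h1 : o (xx q j) (ss q) <;> by_cases h2 : o (ss q) (xx q j') <;>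
            simp [h1, h2, hjj]
      rw [Finset.sum_congr rfl (fun j' _ => e22 j'), Finset.sum_add_distrib]
      congr 1
      · simp
      · by_cases h1 : o (xx q j) (ss q)
        · simp only [h1, if_true]
          rw [Finset.sum_boole]
          simp [out_x_card ho, ha]
        · simp [h1]
    rw [e1, e2, wz, hKdef, kappa_congr (rtg_x_s ho), kappa_congr (rtg_x_t ho), wt, wx, ws]
    by_cases h1 : o (xx q j) (ss q) <;> simp [h1] <;> ring
  have hs : (∑ v : Vq q, wq q (ss q) * wq q v * K (ss q) v)
      = ((q+1) - m) + ((2*q) - a) + 1 + q := by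
    rw [Fintype.sum_sum_type, Fintype.sum_sum_type, Fin.sum_univ_three]
    simp only [fold_uu, fold_xx, fold_zz, fold_ss, fold_tt]
    have e1 : ∑ i : Fin (q+1), wq q (ss q) * wq q (uu q i) * K (ss q) (uu q i)
        = (q+1) - m := by
      have e11 : ∀ i : Fin (q+1), wq q (ss q) * wq q (uu q i) * K (ss q) (uu q i)
          = (if o (zz q) (uu q i) then 1 else 0) := by
        intro i
        rw [ws, wu, one_mul, one_mul, hKdef, kappa_congr (rtg_s_u ho)]
      rw [Finset.sum_congr rfl (fun i _ => e11 i), Finset.sum_boole]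
      simp [out_u_card ho, hm]
    have e2 : ∑ j : Fin (2*q), wq q (ss q) * wq q (xx q j) * K (ss q) (xx q j)
        = (2*q) - a := by
      have e22 : ∀ j : Fin (2*q), wq q (ss q) * wq q (xx q j) * K (ss q) (xx q j)
          = (if o (ss q) (xx q j) then 1 else 0) := by
        intro j
        rw [ws, wx, one_mul, one_mul, hKdef, kappa_congr (rtg_s_x ho)]
      rw [Finset.sum_congr rfl (fun j _ => e22 j), Finset.sum_boole]
      simp [out_x_card ho, ha]
    have e3 : K (ss q) (tt q) = 1 := by
      rw [hKdef, kappa, if_pos (rtg_s_t ho)]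
    rw [e1, e2, wz, e3, hKdef, kappa_self, wt, ws]
    ring
  have ht : (∑ v : Vq q, wq q (tt q) * wq q v * K (tt q) v) = q * q := by
    rw [Fintype.sum_sum_type, Fintype.sum_sum_type, Fin.sum_univ_three]
    simp only [fold_uu, fold_xx, fold_zz, fold_ss, fold_tt]
    have e1 : ∑ i : Fin (q+1), wq q (tt q) * wq q (uu q i) * K (tt q) (uu q i) = 0 :=
      Finset.sum_eq_zero fun i _ => by
        rw [hKdef, kappa_zero (rtg_t_not ho uu_ne_tt), mul_zero]
    have e2 : ∑ j : Fin (2*q), wq q (tt q) * wq q (xx q j) * K (tt q) (xx q j) = 0 :=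
      Finset.sum_eq_zero fun j _ => by
        rw [hKdef, kappa_zero (rtg_t_not ho xx_ne_tt), mul_zero]
    have e3 : K (tt q) (ss q) = 0 := by rw [hKdef, kappa_zero (rtg_t_not ho ss_ne_tt)]
    rw [e1, e2, wz, e3, hKdef, kappa_self, wt, ws]
    ring
  have hz0 : (∑ v : Vq q, wq q (zz q) * wq q v * K (zz q) v) = 0 :=
    Finset.sum_eq_zero fun v _ => by rw [wz, zero_mul, zero_mul]
  -- diag sum
  have hdiag : ∑ p ∈ (Finset.univ : Finset (Vq q)).diag, wq q p.1 * wq q p.2 * K p.1 p.2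
      = (q+1) + 2*q + (1 + q*q) := by
    rw [Finset.sum_diag]
    have e : ∀ v : Vq q, wq q v * wq q v * K v v = wq q v * wq q v := fun v => by
      rw [hKdef, kappa_self, mul_one]
    rw [Finset.sum_congr rfl fun v _ => e v]
    rw [Fintype.sum_sum_type, Fintype.sum_sum_type, Fin.sum_univ_three]
    simp only [fold_uu, fold_xx, fold_zz, fold_ss, fold_tt]
    simp only [wu, wx, wz, ws, wt]
    simp
    try ring
  -- product sum
  have hprod : ∑ p ∈ ((Finset.univ : Finset (Vq q)) ×ˢ Finset.univ),
        wq q p.1 * wq q p.2 * K p.1 p.2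
      = ((q+1) + m * (((q+1) - m) + q)) + (2*q + a * (((q+1) - m) + ((2*q) - a) + 1 + q))
        + 0 + (((q+1) - m) + ((2*q) - a) + 1 + q) + q*q := by
    rw [Finset.sum_product]
    rw [Fintype.sum_sum_type, Fintype.sum_sum_type, Fin.sum_univ_three]
    simp only [fold_uu, fold_xx, fold_zz, fold_ss, fold_tt]
    rw [Finset.sum_congr rfl (fun i _ => hu i), Finset.sum_congr rfl (fun j _ => hx j),
      hz0, hs, ht]
    rw [Finset.sum_add_distrib, Finset.sum_add_distrib, sum_ite_const, sum_ite_const]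
    simp only [Finset.sum_const, Finset.card_univ, Fintype.card_fin, smul_eq_mul, mul_one,
      hmfilter, hafilter]
    ring
  -- combine
  have hunion : (∑ p ∈ (Finset.univ : Finset (Vq q)).diag, wq q p.1 * wq q p.2 * K p.1 p.2)
      + ∑ p ∈ (Finset.univ : Finset (Vq q)).offDiag, wq q p.1 * wq q p.2 * K p.1 p.2
      = ∑ p ∈ ((Finset.univ : Finset (Vq q)) ×ˢ Finset.univ),
          wq q p.1 * wq q p.2 * K p.1 p.2 := by
    rw [← Finset.sum_union (Finset.disjoint_diag_offDiag _), Finset.diag_union_offDiag]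
  have hoff : (∑ p ∈ (Finset.univ : Finset (Vq q)).offDiag, wq q p.1 * wq q p.2 * K p.1 p.2)
      = m * ((q+1) - m) + q * m + a * ((q+1) - m) + a * ((2*q) - a) + a + q * a
        + ((q+1) - m) + ((2*q) - a) + q := by
    have h2 : ((q+1) + 2*q + (1 + q*q))
        + (m * ((q+1) - m) + q * m + a * ((q+1) - m) + a * ((2*q) - a) + a + q * a
          + ((q+1) - m) + ((2*q) - a) + q)
        = ((q+1) + m * (((q+1) - m) + q)) + (2*q + a * (((q+1) - m) + ((2*q) - a) + 1 + q))
          + 0 + (((q+1) - m) + ((2*q) - a) + 1 + q) + q*q := by ring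
    rw [hdiag] at hunion
    rw [hprod] at hunion
    exact Nat.add_left_cancel (hunion.trans h2.symm)
  have hchoose : ∑ v : Vq q, Nat.choose (wq q v) 2 = Nat.choose q 2 := by
    rw [Fintype.sum_sum_type, Fintype.sum_sum_type, Fin.sum_univ_three]
    simp only [fold_uu, fold_xx, fold_zz, fold_ss, fold_tt]
    simp only [wu, wx, wz, ws, wt]
    simp [Nat.choose]
  rw [Rw, hchoose, hoff]
  simp only [Phi]

lemma phi_lt {q k m a : ℕ} (hk : k ≤ q) (hm : m ≤ q + 1) (hmk : m ≠ k)
    (ha : a = 2*q - 2*k) : Phi q a m < Phi q a k := by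
  subst ha
  have h2k : 2*k ≤ 2*q := by omega
  have h3 : 2*q - 2*k ≤ 2*q := by omega
  have hk1 : k ≤ q + 1 := by omega
  simp only [Phi]
  zify [hm, hk1, h2k, h3]
  rcases Nat.lt_or_ge m k with hlt | hge
  · have h4 : (m:ℤ) + 1 ≤ k := by exact_mod_cast hlt
    nlinarith [sq_nonneg ((k:ℤ) - m - 1)]
  · have h5 : m ≠ k := hmk
    have h4 : (k:ℤ) + 1 ≤ m := by
      have : k < m := lt_of_le_of_ne hge (Ne.symm hmk)
      exact_mod_cast this
    nlinarith [sq_nonneg ((m:ℤ) - k - 1)]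

def okk (q k : ℕ) : Vq q → Vq q → Prop := fun v w =>
  (∃ i : Fin (q+1), v = uu q i ∧ w = zz q ∧ (i : ℕ) < k) ∨
  (∃ i : Fin (q+1), v = zz q ∧ w = uu q i ∧ ¬ (i : ℕ) < k) ∨
  (∃ j : Fin (2*q), v = xx q j ∧ w = ss q ∧ (j : ℕ) < 2*q - 2*k) ∨
  (∃ j : Fin (2*q), v = ss q ∧ w = xx q j ∧ ¬ (j : ℕ) < 2*q - 2*k)

lemma okk_orients (k : ℕ) : OrientsEdges ((Gq q).edges : Set (Sym2 (Vq q))) (okk q k) := by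
  constructor
  · rintro u v (⟨i, rfl, rfl, _⟩ | ⟨i, rfl, rfl, _⟩ | ⟨j, rfl, rfl, _⟩ | ⟨j, rfl, rfl, _⟩) <;>
      rw [Finset.mem_coe, mem_edges]
    · exact Or.inl ⟨i, rfl⟩
    · exact Or.inl ⟨i, Sym2.eq_swap⟩
    · exact Or.inr ⟨j, rfl⟩
    · exact Or.inr ⟨j, Sym2.eq_swap⟩
  · intro u v he
    rw [Finset.mem_coe, mem_edges] at he
    rcases he with ⟨i, hi⟩ | ⟨j, hj⟩
    · rw [Sym2.eq_iff] at hi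
      rcases hi with ⟨rfl, rfl⟩ | ⟨rfl, rfl⟩ <;> simp [okk] <;> omega
    · rw [Sym2.eq_iff] at hj
      rcases hj with ⟨rfl, rfl⟩ | ⟨rfl, rfl⟩ <;> simp [okk] <;> omega

open Classical in
lemma acard_okk {k : ℕ} (hk : k ≤ q) : acard (okk q k) = 2*q - 2*k := by
  classical
  rw [acard]
  have h : ∀ j : Fin (2*q), j ∈ (Finset.univ : Finset (Fin (2*q))) →
      (okk q k (xx q j) (ss q) ↔ (j : ℕ) < 2*q - 2*k) := by
    intro j _
    simp [okk]
  rw [Finset.filter_congr h, card_filter_fin_lt (by omega)]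

open Classical in
lemma mcard_okk {k : ℕ} (hk : k ≤ q) : mcard (okk q k) = k := by
  classical
  rw [mcard]
  have h : ∀ i : Fin (q+1), i ∈ (Finset.univ : Finset (Fin (q+1))) →
      (okk q k (uu q i) (zz q) ↔ (i : ℕ) < k) := by
    intro i _
    simp [okk]
  rw [Finset.filter_congr h, card_filter_fin_lt (by omega)]

-- colour invariant of undirected components
def col {q : ℕ} : Vq q → ℕ := fun v => match v with
  | Sum.inl _ => 0
  | Sum.inr (Sum.inl _) => 1
  | Sum.inr (Sum.inr kk) => if kk = 0 then 0 else if kk = 1 then 1 else 2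

lemma col_uu (i : Fin (q+1)) : col (uu q i) = 0 := rfl
lemma col_xx (j : Fin (2*q)) : col (xx q j) = 1 := rfl
lemma col_zz : col (zz q) = 0 := rfl
lemma col_ss : col (ss q) = 1 := rfl
lemma col_tt : col (tt q) = 2 := rfl

lemma adj_col {v w : Vq q} (h : (Gq q).edgeGraph.Adj v w) : col v = col w := by
  have h' : s(v, w) ∈ (Gq q).edges := h
  rw [mem_edges] at h'
  rcases h' with ⟨i, hi⟩ | ⟨j, hj⟩
  · rw [Sym2.eq_iff] at hi
    rcases hi with ⟨rfl, rfl⟩ | ⟨rfl, rfl⟩ <;> rfl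
  · rw [Sym2.eq_iff] at hj
    rcases hj with ⟨rfl, rfl⟩ | ⟨rfl, rfl⟩ <;> rfl

lemma reach_col {v w : Vq q} (h : (Gq q).edgeGraph.Reachable v w) : col v = col w := by
  rw [SimpleGraph.reachable_iff_reflTransGen] at h
  induction h with
  | refl => rfl
  | tail hb hst ih => exact ih.trans (adj_col hst)

lemma reach_zz {v : Vq q} :
    (Gq q).edgeGraph.Reachable v (zz q) ↔ v = zz q ∨ ∃ i, v = uu q i := by
  constructor
  · intro h
    have hc := reach_col h
    rw [col_zz] at hc
    rcases v with i | j | kk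
    · exact Or.inr ⟨i, rfl⟩
    · rw [show (Sum.inr (Sum.inl j) : Vq q) = xx q j from rfl, col_xx] at hc
      omega
    · have hkk : kk = 0 := by
        simp only [col] at hc
        split_ifs at hc <;> first | assumption | omega
      subst hkk
      exact Or.inl rfl
  · rintro (rfl | ⟨i, rfl⟩)
    · exact SimpleGraph.Reachable.refl _
    · exact SimpleGraph.Adj.reachable (by
        show s(uu q i, zz q) ∈ (Gq q).edges
        rw [mem_edges]; exact Or.inl ⟨i, rfl⟩)

def cq (q : ℕ) : (Gq q).edgeGraph.ConnectedComponent :=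
  (Gq q).edgeGraph.connectedComponentMk (zz q)

lemma mem_supp_cq {v : Vq q} : v ∈ (cq q).supp ↔ v = zz q ∨ ∃ i, v = uu q i := by
  rw [SimpleGraph.ConnectedComponent.mem_supp_iff, cq, SimpleGraph.ConnectedComponent.eq]
  exact reach_zz

lemma mem_arcVerts {v : Vq q} :
    v ∈ (Gq q).arcVerts ↔ v = ss q ∨ v = zz q ∨ v = tt q := by
  constructor
  · rintro ⟨a, ha, h⟩
    rw [mem_arcs] at ha
    rcases ha with rfl | rfl <;> rcases h with rfl | rfl <;> tauto
  · rintro (rfl | rfl | rfl)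
    · exact ⟨(ss q, zz q), (mem_arcs q).mpr (Or.inl rfl), Or.inl rfl⟩
    · exact ⟨(ss q, zz q), (mem_arcs q).mpr (Or.inl rfl), Or.inr rfl⟩
    · exact ⟨(zz q, tt q), (mem_arcs q).mpr (Or.inr rfl), Or.inr rfl⟩

lemma dismembered : (Gq q).Dismembered := by
  intro c
  left
  induction c using SimpleGraph.ConnectedComponent.ind with
  | _ v =>
    intro p hp r hr
    obtain ⟨hp1, hp2⟩ := hp
    obtain ⟨hr1, hr2⟩ := hr
    rw [SimpleGraph.ConnectedComponent.mem_supp_iff, SimpleGraph.ConnectedComponent.eq] at hp1 hr1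
    have hcol := reach_col (hp1.trans hr1.symm)
    rw [mem_arcVerts] at hp2 hr2
    rcases hp2 with rfl | rfl | rfl <;> rcases hr2 with rfl | rfl | rfl <;>
      first
        | rfl
        | (exfalso; rw [col_ss] at hcol <;> rw [col_zz] at hcol <;> omega)
        | (exfalso
           simp only [col_ss, col_zz, col_tt] at hcol
           omega)

lemma compEdges_cq : (Gq q).compEdges (cq q) = {e | ∃ i, e = s(uu q i, zz q)} := by
  ext e
  constructor
  · rintro ⟨he, hall⟩
    rw [mem_edges] at he
    rcases he with ⟨i, rfl⟩ | ⟨j, rfl⟩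
    · exact ⟨i, rfl⟩
    · exfalso
      have := hall (xx q j) (by rw [Sym2.mem_iff]; exact Or.inl rfl)
      rw [mem_supp_cq] at this
      rcases this with h | ⟨i, h⟩ <;> simp at h
  · rintro ⟨i, rfl⟩
    refine ⟨(mem_edges q).mpr (Or.inl ⟨i, rfl⟩), ?_⟩
    intro v hv
    rw [Sym2.mem_iff] at hv
    rcases hv with rfl | rfl
    · exact mem_supp_cq.mpr (Or.inr ⟨i, rfl⟩)
    · exact mem_supp_cq.mpr (Or.inl rfl)

lemma arcs_card : (Gq q).arcs.card = 2 := by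
  show ({(ss q, zz q), (zz q, tt q)} : Finset (Vq q × Vq q)).card = 2
  rw [Finset.card_insert_of_notMem (by simp [Prod.ext_iff]), Finset.card_singleton]

open Classical in
noncomputable def tcount (oT : Vq q → Vq q → Prop) : ℕ :=
  #(Finset.univ.filter fun i : Fin (q+1) => oT (uu q i) (zz q))

lemma tcount_le (oT : Vq q → Vq q → Prop) : tcount oT ≤ q + 1 := by
  classical
  exact le_trans (Finset.card_filter_le _ _) (by simp)

section replace
variable {oT : Vq q → Vq q → Prop}

lemma oT_shape (hoT : OrientsEdges ((Gq q).compEdges (cq q)) oT) {v w : Vq q} (h : oT v w) :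
    (∃ i, v = uu q i ∧ w = zz q) ∨ (∃ i, v = zz q ∧ w = uu q i) := by
  have h' := hoT.1 v w h
  rw [compEdges_cq] at h'
  obtain ⟨i, hi⟩ := h'
  rw [Sym2.eq_iff] at hi
  rcases hi with ⟨rfl, rfl⟩ | ⟨rfl, rfl⟩
  · exact Or.inl ⟨i, rfl, rfl⟩
  · exact Or.inr ⟨i, rfl, rfl⟩

lemma mem_supp_uu (i : Fin (q+1)) : uu q i ∈ (cq q).supp := mem_supp_cq.mpr (Or.inr ⟨i, rfl⟩)
lemma mem_supp_zz : zz q ∈ (cq q).supp := mem_supp_cq.mpr (Or.inl rfl)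
lemma not_mem_supp_xx (j : Fin (2*q)) : xx q j ∉ (cq q).supp := by
  rw [mem_supp_cq]
  simp
lemma not_mem_supp_ss : ss q ∉ (cq q).supp := by
  rw [mem_supp_cq]
  simp

lemma replace_uz_iff (i : Fin (q+1)) :
    replaceO (Gq q) (cq q) o oT (uu q i) (zz q) ↔ oT (uu q i) (zz q) := by
  constructor
  · rintro (⟨h1, hc | hc⟩ | h2)
    · exact absurd (mem_supp_uu i) hc
    · exact absurd mem_supp_zz hc
    · exact h2
  · exact fun h => Or.inr h

lemma replace_zu_iff (i : Fin (q+1)) :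
    replaceO (Gq q) (cq q) o oT (zz q) (uu q i) ↔ oT (zz q) (uu q i) := by
  constructor
  · rintro (⟨h1, hc | hc⟩ | h2)
    · exact absurd mem_supp_zz hc
    · exact absurd (mem_supp_uu i) hc
    · exact h2
  · exact fun h => Or.inr h

lemma replace_xs_iff (hoT : OrientsEdges ((Gq q).compEdges (cq q)) oT) (j : Fin (2*q)) :
    replaceO (Gq q) (cq q) o oT (xx q j) (ss q) ↔ o (xx q j) (ss q) := by
  constructor
  · rintro (⟨h1, _⟩ | h2)
    · exact h1
    · rcases oT_shape hoT h2 with ⟨i, hi, _⟩ | ⟨i, hi, _⟩ <;> simp at hi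
  · exact fun h => Or.inl ⟨h, Or.inl (not_mem_supp_xx j)⟩

lemma replace_sx_iff (hoT : OrientsEdges ((Gq q).compEdges (cq q)) oT) (j : Fin (2*q)) :
    replaceO (Gq q) (cq q) o oT (ss q) (xx q j) ↔ o (ss q) (xx q j) := by
  constructor
  · rintro (⟨h1, _⟩ | h2)
    · exact h1
    · rcases oT_shape hoT h2 with ⟨i, hi, _⟩ | ⟨i, hi, _⟩ <;> simp at hi
  · exact fun h => Or.inl ⟨h, Or.inl not_mem_supp_ss⟩

lemma replace_orients (ho : OrientsEdges ((Gq q).edges : Set (Sym2 (Vq q))) o)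
    (hoT : OrientsEdges ((Gq q).compEdges (cq q)) oT) :
    OrientsEdges ((Gq q).edges : Set (Sym2 (Vq q))) (replaceO (Gq q) (cq q) o oT) := by
  constructor
  · rintro u v (⟨h1, _⟩ | h2)
    · exact ho.1 u v h1
    · rcases oT_shape hoT h2 with ⟨i, rfl, rfl⟩ | ⟨i, rfl, rfl⟩
      · rw [Finset.mem_coe, mem_edges]
        exact Or.inl ⟨i, rfl⟩
      · rw [Finset.mem_coe, mem_edges]
        exact Or.inl ⟨i, Sym2.eq_swap⟩
  · intro u v he
    rw [Finset.mem_coe, mem_edges] at he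
    rcases he with ⟨i, hi⟩ | ⟨j, hj⟩
    · rw [Sym2.eq_iff] at hi
      rcases hi with ⟨rfl, rfl⟩ | ⟨rfl, rfl⟩
      · rw [replace_uz_iff, replace_zu_iff]
        exact hoT.2 _ _ (by rw [compEdges_cq]; exact ⟨i, rfl⟩)
      · rw [replace_uz_iff, replace_zu_iff]
        exact hoT.2 _ _ (by rw [compEdges_cq]; exact ⟨i, Sym2.eq_swap⟩)
    · rw [Sym2.eq_iff] at hj
      rcases hj with ⟨rfl, rfl⟩ | ⟨rfl, rfl⟩
      · rw [replace_xs_iff hoT, replace_sx_iff hoT]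
        exact ho.2 _ _ (by rw [Finset.mem_coe, mem_edges]; exact Or.inr ⟨j, rfl⟩)
      · rw [replace_xs_iff hoT, replace_sx_iff hoT]
        exact ho.2 _ _ (by rw [Finset.mem_coe, mem_edges]; exact Or.inr ⟨j, Sym2.eq_swap⟩)

open Classical in
lemma acard_replace (hoT : OrientsEdges ((Gq q).compEdges (cq q)) oT) :
    acard (replaceO (Gq q) (cq q) o oT) = acard o := by
  rw [acard, acard]
  exact congrArg Finset.card (Finset.filter_congr fun j _ => replace_xs_iff hoT j)

open Classical in
lemma mcard_replace (hoT : OrientsEdges ((Gq q).compEdges (cq q)) oT) :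
    mcard (replaceO (Gq q) (cq q) o oT) = tcount oT := by
  rw [mcard, tcount]
  exact congrArg Finset.card (Finset.filter_congr fun i _ => replace_uz_iff i)

end replace

end Stmt15
/-- For every positive integer `q` there is a dismembered mixed graph with exactly
two arcs, a weight function and an undirected component such that every optimal
replacement set for it has at least `q + 1` elements. -/
theorem stmt15 (q : ℕ) (hq : 0 < q) :
    ∃ (V : Type) (_ : Fintype V) (_ : DecidableEq V) (G : MixedGraph V) (w : V → ℕ)
      (c : G.edgeGraph.ConnectedComponent),
      G.arcs.card = 2 ∧ G.Dismembered ∧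
        ∀ 𝒯 : Set (V → V → Prop), IsOptReplacementSet G w c 𝒯 →
          ∃ f : Fin (q + 1) → (V → V → Prop), Function.Injective f ∧ ∀ i, f i ∈ 𝒯 := by
  classical
  refine ⟨Stmt15.Vq q, inferInstance, inferInstance, Stmt15.Gq q, Stmt15.wq q, Stmt15.cq q,
    Stmt15.arcs_card, Stmt15.dismembered, ?_⟩
  intro 𝒯 h𝒯
  have key : ∀ k : Fin (q+1), ∃ oT, oT ∈ 𝒯 ∧ Stmt15.tcount oT = (k : ℕ) := by
    intro k
    have hk : (k : ℕ) ≤ q := by omega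
    obtain ⟨oT, hoT𝒯, hle⟩ := h𝒯.2 (Stmt15.okk q k) (Stmt15.okk_orients (k : ℕ))
    have hoT := h𝒯.1 oT hoT𝒯
    have ho' := Stmt15.replace_orients (Stmt15.okk_orients (k : ℕ)) hoT
    rw [Stmt15.Rw_eq (Stmt15.okk_orients (k : ℕ)), Stmt15.Rw_eq ho',
      Stmt15.acard_okk hk, Stmt15.mcard_okk hk, Stmt15.acard_replace hoT,
      Stmt15.mcard_replace hoT, Stmt15.acard_okk hk] at hle
    refine ⟨oT, hoT𝒯, ?_⟩
    by_contra hne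
    exact absurd hle (not_le.mpr (Stmt15.phi_lt hk (Stmt15.tcount_le oT) hne rfl))
  choose f hf1 hf2 using key
  refine ⟨f, ?_, hf1⟩
  intro k k' hkk
  have h1 := hf2 k
  rw [hkk] at h1
  exact Fin.val_injective (h1.symm.trans (hf2 k'))
end
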